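/- arXiv:1605.08160 — 3 statements merged into one kernel-verified Lean document; each statement's English description precedes it below -/
import Mathlib

section
/- Let f be a holomorphic function on the unit disk with sup_{z∈𝔻}|f(z)| ≤ 1, and fix 0 < δ < 1/5. If a point z in the unit disk satisfies |f(z)| ≤ δ⁴ and (1−|z|²)|f'(z)| ≥ δ, then |f(w)| ≥ δ⁴ for every w in the unit disk with ρ(z,w) = δ². -/
open Complex Metric Set Filter

noncomputable section

/-- The open unit disk in `ℂ`. -/
def unitDisk : Set ℂ := {z : ℂ | ‖z‖ < 1}

/-- A real-valued function is harmonic on a set `Ω ⊆ ℂ` if, near every point of `Ω`,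
it is the real part of a holomorphic function. -/
def HarmonicOnSet (u : ℂ → ℝ) (Ω : Set ℂ) : Prop :=
  ∀ z ∈ Ω, ∃ r > 0, Metric.ball z r ⊆ Ω ∧
    ∃ F : ℂ → ℂ, DifferentiableOn ℂ F (Metric.ball z r) ∧
      ∀ w ∈ Metric.ball z r, u w = (F w).re

/-- A positive harmonic function on the unit disk. -/
def PosHarmonic (H : ℂ → ℝ) : Prop :=
  HarmonicOnSet H unitDisk ∧ ∀ z ∈ unitDisk, 0 < H z

/-- The pseudohyperbolic distance `ρ(z,w) = |z - w| / |1 - z̄ w|`. -/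
def pd (z w : ℂ) : ℝ := ‖z - w‖ / ‖1 - (starRingEnd ℂ) z * w‖

/-- The open pseudohyperbolic disk `D(a,r)`. -/
def pBall (a : ℂ) (r : ℝ) : Set ℂ := {w ∈ unitDisk | pd a w < r}

/-- The closed pseudohyperbolic disk. -/
def pClosedBall (a : ℂ) (r : ℝ) : Set ℂ := {w ∈ unitDisk | pd a w ≤ r}

/-- An individual Blaschke factor with zero `a`. -/
def blaschkeFactor (a z : ℂ) : ℂ :=
  if a = 0 then z
  else ((starRingEnd ℂ) a / (‖a‖ : ℂ)) * ((a - z) / (1 - (starRingEnd ℂ) a * z))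

/-- The Blaschke product with zero sequence `Λ`. -/
def blaschkeProduct (Λ : ℕ → ℂ) (z : ℂ) : ℂ := ∏' n, blaschkeFactor (Λ n) z

/-- A Blaschke sequence: a sequence in the unit disk satisfying the Blaschke condition. -/
def BlaschkeSeq (Λ : ℕ → ℂ) : Prop :=
  (∀ n, Λ n ∈ unitDisk) ∧ Summable fun n => 1 - ‖Λ n‖

/-- The Nevanlinna class: holomorphic functions on the disk such that `log⁺ |f|`
has a positive harmonic majorant. -/
def Nev (f : ℂ → ℂ) : Prop :=
  DifferentiableOn ℂ f unitDisk ∧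
  ∃ H : ℂ → ℝ, PosHarmonic H ∧ ∀ z ∈ unitDisk, Real.log (‖f z‖) ≤ H z

/-- `Λ` is an interpolating sequence for the Nevanlinna class. -/
def NevInterpolating (Λ : ℕ → ℂ) : Prop :=
  Function.Injective Λ ∧ (∀ n, Λ n ∈ unitDisk) ∧
  ∃ H : ℂ → ℝ, PosHarmonic H ∧
    ∀ n, Real.exp (-H (Λ n)) ≤ ∏' k : {k : ℕ // k ≠ n}, pd (Λ k.1) (Λ n)

/-- A Nevanlinna interpolating Blaschke product. -/
def NevInterpBlaschke (B : ℂ → ℂ) : Prop :=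
  ∃ Λ : ℕ → ℂ, NevInterpolating Λ ∧ B = blaschkeProduct Λ

/-- The ideal generated by `f 0, …, f (m-1)` in the Nevanlinna class
(membership being recorded through the values on the unit disk). -/
def idealI (m : ℕ) (f : Fin m → ℂ → ℂ) : Set (ℂ → ℂ) :=
  {g | ∃ h : Fin m → ℂ → ℂ, (∀ i, Nev (h i)) ∧
        ∀ z ∈ unitDisk, g z = ∑ i, f i z * h i z}

/-- The set `J(f 0, …, f (m-1))`. -/
def idealJ (m : ℕ) (f : Fin m → ℂ → ℂ) : Set (ℂ → ℂ) :=
  {g | Nev g ∧ ∃ H : ℂ → ℝ, PosHarmonic H ∧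
        ∀ z ∈ unitDisk,
          ‖g z‖ ≤ Real.exp (H z) * ∑ i, ‖f i z‖}

/-- The ideal generated by a pair `f₁, f₂` in the Nevanlinna class. -/
def idealI2 (f₁ f₂ : ℂ → ℂ) : Set (ℂ → ℂ) :=
  {g | ∃ h₁ h₂ : ℂ → ℂ, Nev h₁ ∧ Nev h₂ ∧
        ∀ z ∈ unitDisk, g z = f₁ z * h₁ z + f₂ z * h₂ z}

/-- The set `J(f₁, f₂)`. -/
def idealJ2 (f₁ f₂ : ℂ → ℂ) : Set (ℂ → ℂ) :=
  {g | Nev g ∧ ∃ H : ℂ → ℝ, PosHarmonic H ∧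
        ∀ z ∈ unitDisk,
          ‖g z‖ ≤ Real.exp (H z) * (‖f₁ z‖ + ‖f₂ z‖)}

/-- Harmonic measure, at `z`, of the outer boundary `∂𝔻` in a subdomain `Ω` of the unit
disk, described à la Perron: the supremum of the values `u z` of harmonic functions
`0 ≤ u ≤ 1` on `Ω` whose boundary limits superior vanish at all boundary points of `Ω`
lying inside the unit disk. -/
def hmOuter (Ω : Set ℂ) (z : ℂ) : ℝ :=
  sSup {t : ℝ | ∃ u : ℂ → ℝ, HarmonicOnSet u Ω ∧
    (∀ w ∈ Ω, 0 ≤ u w ∧ u w ≤ 1) ∧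
    (∀ ζ ∈ frontier Ω, ‖ζ‖ < 1 →
      ∀ ε > 0, ∀ᶠ w in nhdsWithin ζ Ω, u w ≤ ε) ∧
    t = u z}

/-- The domain `Ω_n^H`: the unit disk minus the (closed) pseudohyperbolic disks
`𝒟_k^H = D(λ_k, e^{-H(λ_k)})` over the `k ≠ n` with `ρ(λ_k, λ_n) ≤ 1/2`. -/
def omegaDom (Λ : ℕ → ℂ) (H : ℂ → ℝ) (n : ℕ) : Set ℂ :=
  unitDisk \ ⋃ k ∈ {k : ℕ | k ≠ n ∧ pd (Λ k) (Λ n) ≤ 1/2},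
    pClosedBall (Λ k) (Real.exp (-H (Λ k)))

/-- A function invertible in the Nevanlinna class. -/
def NevInvertible (g : ℂ → ℂ) : Prop :=
  Nev g ∧ ∃ h : ℂ → ℂ, Nev h ∧ ∀ z ∈ unitDisk, g z * h z = 1

lemma unitDisk_eq : unitDisk = Metric.ball (0:ℂ) 1 := by
  ext w; simp [unitDisk, Complex.dist_eq]

lemma normSq_key (z ζ : ℂ) :
    Complex.normSq (1 + (starRingEnd ℂ) z * ζ) - Complex.normSq (ζ + z)
      = (1 - Complex.normSq z) * (1 - Complex.normSq ζ) := by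
  simp only [Complex.normSq_apply, Complex.add_re, Complex.add_im, Complex.mul_re,
    Complex.mul_im, Complex.one_re, Complex.one_im, Complex.conj_re, Complex.conj_im]
  ring

lemma denom_ne (z ζ : ℂ) (hz : ‖z‖ < 1) (hζ : ‖ζ‖ < 1) :
    1 + (starRingEnd ℂ) z * ζ ≠ 0 := by
  intro h
  have h1 : ‖(starRingEnd ℂ) z * ζ‖ < 1 := by
    rw [norm_mul, Complex.norm_conj]
    nlinarith [norm_nonneg z, norm_nonneg ζ]
  have h2 : (starRingEnd ℂ) z * ζ = -1 := by linear_combination h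
  rw [h2] at h1; simp at h1

lemma denom_ne' (z w : ℂ) (hz : ‖z‖ < 1) (hw : ‖w‖ < 1) :
    1 - (starRingEnd ℂ) z * w ≠ 0 := by
  intro h
  have h1 : ‖(starRingEnd ℂ) z * w‖ < 1 := by
    rw [norm_mul, Complex.norm_conj]
    nlinarith [norm_nonneg z, norm_nonneg w]
  have h2 : (starRingEnd ℂ) z * w = 1 := by linear_combination -h
  rw [h2] at h1; simp at h1

lemma mobius_mem (z ζ : ℂ) (hz : ‖z‖ < 1) (hζ : ‖ζ‖ < 1) :
    ‖(ζ + z) / (1 + (starRingEnd ℂ) z * ζ)‖ < 1 := by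
  have hne := denom_ne z ζ hz hζ
  have hpos : 0 < ‖1 + (starRingEnd ℂ) z * ζ‖ := by
    simpa [norm_pos_iff] using hne
  rw [norm_div, div_lt_one hpos]
  have h1 : Complex.normSq z < 1 := by
    rw [← Complex.sq_norm]; nlinarith [norm_nonneg z]
  have h2 : Complex.normSq ζ < 1 := by
    rw [← Complex.sq_norm]; nlinarith [norm_nonneg ζ]
  have hk := normSq_key z ζ
  have hlt : Complex.normSq (ζ + z) < Complex.normSq (1 + (starRingEnd ℂ) z * ζ) := by
    nlinarith
  rw [← Complex.sq_norm, ← Complex.sq_norm] at hlt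
  nlinarith [norm_nonneg (1 + (starRingEnd ℂ) z * ζ), norm_nonneg (ζ + z)]

lemma phi_deriv (z : ℂ) :
    deriv (fun ξ => (ξ + z) / (1 + (starRingEnd ℂ) z * ξ)) 0
      = 1 - (starRingEnd ℂ) z * z := by
  have h1 : HasDerivAt (fun ξ : ℂ => ξ + z) 1 0 := (hasDerivAt_id 0).add_const z
  have h2 : HasDerivAt (fun ξ : ℂ => 1 + (starRingEnd ℂ) z * ξ) ((starRingEnd ℂ) z) 0 := by
    simpa using (((hasDerivAt_id (0:ℂ)).const_mul ((starRingEnd ℂ) z)).const_add 1)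
  have hne : (1 : ℂ) + (starRingEnd ℂ) z * 0 ≠ 0 := by simp
  have := (h1.div h2 hne).deriv
  rw [show deriv (fun ξ => (ξ + z) / (1 + (starRingEnd ℂ) z * ξ)) 0 = _ from this]
  field_simp
  ring

lemma phi_point (z w : ℂ) (hzw : 1 - (starRingEnd ℂ) z * w ≠ 0)
    (hne2 : 1 + (starRingEnd ℂ) z * ((w - z) / (1 - (starRingEnd ℂ) z * w)) ≠ 0)
    (h3 : (1:ℂ) - z * (starRingEnd ℂ) z ≠ 0) :
    ((w - z) / (1 - (starRingEnd ℂ) z * w) + z)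
      / (1 + (starRingEnd ℂ) z * ((w - z) / (1 - (starRingEnd ℂ) z * w))) = w := by
  rw [div_eq_iff hne2, div_add' _ _ _ hzw, mul_div_assoc', one_add_div hzw, mul_div_assoc', div_left_inj' hzw]
  ring

theorem statement8 (f : ℂ → ℂ) (hd : DifferentiableOn ℂ f unitDisk)
    (hb : ∀ z ∈ unitDisk, ‖f z‖ ≤ 1)
    (δ : ℝ) (hδ0 : 0 < δ) (hδ : δ < 1/5)
    (z : ℂ) (hz : z ∈ unitDisk)
    (hfz : ‖f z‖ ≤ δ ^ 4)
    (hfz' : δ ≤ (1 - ‖z‖ ^ 2) * ‖deriv f z‖) :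
    ∀ w ∈ unitDisk, pd z w = δ ^ 2 → δ ^ 4 ≤ ‖f w‖ := by
  intro w hw hpd
  have hz1 : ‖z‖ < 1 := hz
  have hw1 : ‖w‖ < 1 := hw
  have hδ2 : δ ^ 2 < 1 / 25 := by nlinarith
  have hnsq : Complex.normSq z < 1 := by
    rw [← Complex.sq_norm]; nlinarith [norm_nonneg z]
  -- the Möbius map and its inverse point
  set φ : ℂ → ℂ := fun ξ => (ξ + z) / (1 + (starRingEnd ℂ) z * ξ) with hφ
  set ζ₀ : ℂ := (w - z) / (1 - (starRingEnd ℂ) z * w) with hζ₀def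
  have hzw_ne : 1 - (starRingEnd ℂ) z * w ≠ 0 := denom_ne' z w hz1 hw1
  have hζabs : ‖ζ₀‖ = δ ^ 2 := by
    rw [hζ₀def, norm_div, ← hpd, pd, norm_sub_rev]
  have hζlt : ‖ζ₀‖ < 1 := by rw [hζabs]; nlinarith
  have hne2 : 1 + (starRingEnd ℂ) z * ζ₀ ≠ 0 := denom_ne z ζ₀ hz1 hζlt
  have h3 : (1:ℂ) - z * (starRingEnd ℂ) z ≠ 0 := by
    rw [Complex.mul_conj]
    intro h
    have : (Complex.normSq z : ℂ) = 1 := by linear_combination -h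
    have := Complex.ofReal_injective (by exact_mod_cast this)
    linarith
  have hφζ₀ : φ ζ₀ = w := phi_point z w hzw_ne hne2 h3
  have hφ0 : φ 0 = z := by simp [hφ]
  -- the composed function
  set g : ℂ → ℂ := fun ξ => f (φ ξ) with hg
  have hφdiff : ∀ ξ : ℂ, ‖ξ‖ < 1 → DifferentiableAt ℂ φ ξ := by
    intro ξ hξ
    rw [hφ]
    have hnum : DifferentiableAt ℂ (fun ξ : ℂ => ξ + z) ξ := by fun_prop
    have hden : DifferentiableAt ℂ (fun ξ : ℂ => 1 + (starRingEnd ℂ) z * ξ) ξ := by fun_prop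
    exact hnum.div hden (denom_ne z ξ hz1 hξ)
  have hopen : IsOpen unitDisk := by rw [unitDisk_eq]; exact isOpen_ball
  have hfdiff : ∀ ξ : ℂ, ‖ξ‖ < 1 → DifferentiableAt ℂ f (φ ξ) := by
    intro ξ hξ
    exact hd.differentiableAt (hopen.mem_nhds (mobius_mem z ξ hz1 hξ))
  have hgdiff : ∀ ξ : ℂ, ‖ξ‖ < 1 → DifferentiableAt ℂ g ξ := by
    intro ξ hξ
    exact DifferentiableAt.comp ξ (hfdiff ξ hξ) (hφdiff ξ hξ)
  have hRcoe : ((4/5 : NNReal) : ℝ) = 4/5 := by norm_num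
  have habs45 : |((4/5 : NNReal) : ℝ)| = 4/5 := by
    rw [hRcoe]; exact abs_of_pos (by norm_num)
  have hgd : DifferentiableOn ℂ g (Metric.closedBall (0:ℂ) ((4/5 : NNReal) : ℝ)) := by
    intro ξ hξ
    have : ‖ξ‖ ≤ 4/5 := by
      rw [hRcoe] at hξ
      simpa [Complex.dist_eq] using hξ
    exact (hgdiff ξ (by linarith)).differentiableWithinAt
  have hps : HasFPowerSeriesOnBall g (cauchyPowerSeries g 0 (4/5 : NNReal)) 0 (4/5 : NNReal) :=
    hgd.hasFPowerSeriesOnBall (by norm_num)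
  set p := cauchyPowerSeries g 0 (4/5 : NNReal) with hp
  -- the sum at ζ₀
  have hmem : ζ₀ ∈ EMetric.ball (0:ℂ) ((4/5 : NNReal) : ENNReal) := by
    show ζ₀ ∈ Metric.eball (0:ℂ) ((4/5 : NNReal) : ENNReal)
    rw [Metric.emetric_ball_nnreal, Metric.mem_ball, Complex.dist_eq, sub_zero]
    rw [show ‖ζ₀‖ = δ ^ 2 from hζabs, hRcoe]
    nlinarith
  have hsum : HasSum (fun n => ζ₀ ^ n • p.coeff n) (f w) := by
    have := hps.hasSum hmem
    simp only [FormalMultilinearSeries.apply_eq_pow_smul_coeff, zero_add] at this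
    rwa [show g ζ₀ = f w by rw [hg]; simp only [hφζ₀]] at this
  -- identify the first two coefficients
  have hc0 : p.coeff 0 = f z := by
    have h0 := hps.coeff_zero (fun _ => 1)
    have : p.coeff 0 = g 0 := h0
    rw [this, hg]
    simp only [hφ0]
  have hc1 : p.coeff 1 = deriv f z * (1 - (starRingEnd ℂ) z * z) := by
    have hda := hps.hasFPowerSeriesAt.deriv
    have h5 : p.coeff 1 = deriv g 0 := hda.symm
    rw [h5, hg]
    have : deriv (f ∘ φ) 0 = deriv f (φ 0) * deriv φ 0 :=
      deriv_comp 0 (hfdiff 0 (by simp)) (hφdiff 0 (by simp))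
    rw [show (fun ξ => f (φ ξ)) = f ∘ φ from rfl, this, hφ0, hφ, phi_deriv z]
  -- coefficient bounds
  have hcoeff : ∀ n, ‖p.coeff n‖ ≤ (5/4 : ℝ) ^ n := by
    intro n
    rw [← FormalMultilinearSeries.norm_apply_eq_norm_coef]
    have hb1 := norm_cauchyPowerSeries_le g 0 ((4/5 : NNReal) : ℝ) n
    have hC : (2 * Real.pi)⁻¹ * ∫ θ : ℝ in (0)..2 * Real.pi,
        ‖g (circleMap 0 ((4/5 : NNReal) : ℝ) θ)‖ ≤ 1 := by
      have hcont : Continuous fun θ : ℝ => ‖g (circleMap 0 ((4/5 : NNReal) : ℝ) θ)‖ := by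
        apply Continuous.norm
        apply (hgd.continuousOn).comp_continuous (continuous_circleMap 0 _)
        intro θ
        simp only [Metric.mem_closedBall, Complex.dist_eq, sub_zero, norm_circleMap_zero]
        rw [habs45, hRcoe]
      have hle : ∫ θ : ℝ in (0)..2 * Real.pi, ‖g (circleMap 0 ((4/5 : NNReal) : ℝ) θ)‖
          ≤ ∫ _ : ℝ in (0)..2 * Real.pi, (1:ℝ) := by
        apply intervalIntegral.integral_mono_on Real.two_pi_pos.le
          (hcont.intervalIntegrable 0 (2*Real.pi)) intervalIntegrable_const
        intro θ _
        have hmem2 : circleMap 0 ((4/5 : NNReal) : ℝ) θ ∈ unitDisk := by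
          show ‖_‖ < 1
          rw [norm_circleMap_zero, habs45]
          norm_num
        simpa [hg] using hb _ (mobius_mem z _ hz1 hmem2)
      rw [intervalIntegral.integral_const, smul_eq_mul, mul_one] at hle
      have h2pi : (0:ℝ) < 2 * Real.pi := Real.two_pi_pos
      calc (2 * Real.pi)⁻¹ * ∫ θ : ℝ in (0)..2 * Real.pi,
            ‖g (circleMap 0 ((4/5 : NNReal) : ℝ) θ)‖
          ≤ (2 * Real.pi)⁻¹ * (2 * Real.pi - 0) := by
            apply mul_le_mul_of_nonneg_left hle (by positivity)
        _ = 1 := by field_simp; ring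
    calc ‖p n‖ ≤ ((2 * Real.pi)⁻¹ * ∫ θ : ℝ in (0)..2 * Real.pi,
            ‖g (circleMap 0 ((4/5 : NNReal) : ℝ) θ)‖) * |((4/5 : NNReal) : ℝ)|⁻¹ ^ n := hb1
      _ ≤ 1 * |((4/5 : NNReal) : ℝ)|⁻¹ ^ n := by
          apply mul_le_mul_of_nonneg_right hC (by positivity)
      _ = (5/4 : ℝ) ^ n := by rw [one_mul, habs45]; norm_num
  -- tail estimate
  set q : ℝ := (5/4) * δ ^ 2 with hq
  have hq0 : 0 ≤ q := by positivity
  have hq20 : q ≤ 1/20 := by rw [hq]; nlinarith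
  have hq1 : q < 1 := by linarith
  have htermb : ∀ n : ℕ, ‖ζ₀ ^ (n + 2) • p.coeff (n + 2)‖ ≤ q ^ 2 * q ^ n := by
    intro n
    rw [norm_smul, norm_pow, hζabs]
    have h1 : (δ ^ 2) ^ (n + 2) * ‖p.coeff (n + 2)‖
        ≤ (δ ^ 2) ^ (n + 2) * (5/4 : ℝ) ^ (n + 2) := by
      apply mul_le_mul_of_nonneg_left (hcoeff (n + 2)) (by positivity)
    calc (δ ^ 2) ^ (n + 2) * ‖p.coeff (n + 2)‖
        ≤ (δ ^ 2) ^ (n + 2) * (5/4 : ℝ) ^ (n + 2) := h1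
      _ = q ^ (n + 2) := by rw [hq, mul_pow]; ring
      _ = q ^ 2 * q ^ n := by ring
  have hgs : Summable fun n : ℕ => q ^ 2 * q ^ n :=
    (summable_geometric_of_lt_one hq0 hq1).mul_left _
  have hTs : Summable fun n : ℕ => ‖ζ₀ ^ (n + 2) • p.coeff (n + 2)‖ :=
    Summable.of_nonneg_of_le (fun n => norm_nonneg _) htermb hgs
  have h2 : HasSum (fun n => ζ₀ ^ (n + 2) • p.coeff (n + 2))
      (f w - ∑ i ∈ Finset.range 2, ζ₀ ^ i • p.coeff i) :=
    (hasSum_nat_add_iff' 2).2 hsum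
  have hS : ∑ i ∈ Finset.range 2, ζ₀ ^ i • p.coeff i = f z + ζ₀ * p.coeff 1 := by
    rw [Finset.sum_range_succ, Finset.sum_range_one, hc0]
    simp [smul_eq_mul]
  rw [hS] at h2
  have hT : ‖f w - (f z + ζ₀ * p.coeff 1)‖ ≤ q ^ 2 * (1 - q)⁻¹ := by
    rw [← h2.tsum_eq]
    calc ‖∑' n, ζ₀ ^ (n + 2) • p.coeff (n + 2)‖
        ≤ ∑' n, ‖ζ₀ ^ (n + 2) • p.coeff (n + 2)‖ := norm_tsum_le_tsum_norm hTs
      _ ≤ ∑' n : ℕ, q ^ 2 * q ^ n := Summable.tsum_le_tsum htermb hTs hgs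
      _ = q ^ 2 * (1 - q)⁻¹ := by
          rw [tsum_mul_left, tsum_geometric_of_lt_one hq0 hq1]
  -- lower bound on the linear term
  have hc1norm : δ ^ 3 ≤ ‖ζ₀ * p.coeff 1‖ := by
    rw [norm_mul, hζabs, hc1, norm_mul]
    have habs1 : ‖1 - (starRingEnd ℂ) z * z‖ = 1 - ‖z‖ ^ 2 := by
      rw [show (1:ℂ) - (starRingEnd ℂ) z * z = ((1 - Complex.normSq z : ℝ) : ℂ) by
        push_cast
        rw [mul_comm ((starRingEnd ℂ) z) z, Complex.mul_conj]]
      rw [Complex.norm_real, Real.norm_eq_abs, abs_of_pos (by linarith), Complex.sq_norm]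
    rw [habs1]
    calc δ ^ 3 = δ ^ 2 * δ := by ring
      _ ≤ δ ^ 2 * ((1 - ‖z‖ ^ 2) * ‖deriv f z‖) := by
          apply mul_le_mul_of_nonneg_left hfz' (by positivity)
      _ = δ ^ 2 * (‖deriv f z‖ * (1 - ‖z‖ ^ 2)) := by ring
  -- assemble
  have hlow : ‖ζ₀ * p.coeff 1‖ - ‖(f z : ℂ)‖ - ‖f w - (f z + ζ₀ * p.coeff 1)‖ ≤ ‖f w‖ := by
    have htri : ‖ζ₀ * p.coeff 1‖ ≤ ‖f z + ζ₀ * p.coeff 1‖ + ‖(f z : ℂ)‖ := by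
      calc ‖ζ₀ * p.coeff 1‖ = ‖(f z + ζ₀ * p.coeff 1) - f z‖ := by ring_nf
        _ ≤ ‖f z + ζ₀ * p.coeff 1‖ + ‖(f z : ℂ)‖ := norm_sub_le _ _
    have htri2 : ‖f z + ζ₀ * p.coeff 1‖ ≤ ‖f w‖ + ‖f w - (f z + ζ₀ * p.coeff 1)‖ := by
      calc ‖f z + ζ₀ * p.coeff 1‖ = ‖f w - (f w - (f z + ζ₀ * p.coeff 1))‖ := by ring_nf
        _ ≤ ‖f w‖ + ‖f w - (f z + ζ₀ * p.coeff 1)‖ := norm_sub_le _ _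
    linarith
  have hfz_norm : ‖(f z : ℂ)‖ ≤ δ ^ 4 := by exact hfz
  have hinv : (1 - q)⁻¹ ≤ 20/19 := by
    rw [show (20:ℝ)/19 = ((19:ℝ)/20)⁻¹ by norm_num]
    apply inv_anti₀ (by norm_num)
    linarith
  have hqq : q ^ 2 * (1 - q)⁻¹ ≤ (25/16) * δ ^ 4 * (20/19) := by
    have : q ^ 2 = (25/16) * δ ^ 4 := by rw [hq]; ring
    rw [this]
    apply mul_le_mul_of_nonneg_left hinv (by positivity)
  have h45 : δ ^ 4 ≤ δ ^ 3 * (1/5) := by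
    calc δ ^ 4 = δ ^ 3 * δ := by ring
      _ ≤ δ ^ 3 * (1/5) := by
          apply mul_le_mul_of_nonneg_left (le_of_lt hδ) (pow_pos hδ0 3).le
  have hfinal : δ ^ 4 ≤ δ ^ 3 - δ ^ 4 - (25/16) * δ ^ 4 * (20/19) := by
    linarith [pow_pos hδ0 3, pow_pos hδ0 4]
  linarith

end
end

section
/- Let Λ = {λ_n} be a sequence in the unit disk with Blaschke product B, and let H ∈ Har₊(𝔻) with inf_{z∈𝔻} H(z) ≥ log 3 be such that |B(z)| ≥ e^{−H(z)} ρ(z,Λ) for all z in the unit disk. Then for every H₁ ∈ Har₊(𝔻) with inf_{z∈𝔻} H₁(z) ≥ log 3, one has |B(z)| ≥ e^{−(2H(z) + 2H₁(z))} whenever z lies outside the union of the disks D(λ_n, e^{−H₁(λ_n)}). -/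
open Complex Metric Set Filter

noncomputable section

open scoped Interval in
lemma abs_sub_le_of_mem_uIcc {a b t x : ℝ} (hx : x ∈ Set.uIcc a b) :
    |x - t| ≤ max (|a - t|) (|b - t|) := by
  rcases le_total a b with h | h
  · rw [Set.uIcc_of_le h, Set.mem_Icc] at hx
    rw [abs_sub_le_iff]
    constructor
    · exact le_max_of_le_right (by rcases abs_cases (b-t) with ⟨h1,h2⟩|⟨h1,h2⟩ <;> linarith)
    · exact le_max_of_le_left (by rcases abs_cases (a-t) with ⟨h1,h2⟩|⟨h1,h2⟩ <;> linarith)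
  · rw [Set.uIcc_of_ge h, Set.mem_Icc] at hx
    rw [abs_sub_le_iff]
    constructor
    · exact le_max_of_le_left (by rcases abs_cases (a-t) with ⟨h1,h2⟩|⟨h1,h2⟩ <;> linarith)
    · exact le_max_of_le_right (by rcases abs_cases (b-t) with ⟨h1,h2⟩|⟨h1,h2⟩ <;> linarith)

lemma deriv_zero_of_re_eq_zero {D : ℂ → ℂ} {U : Set ℂ}
    (hre : ∀ w ∈ U, (D w).re = 0) {x : ℂ} (hx : U ∈ nhds x) {d : ℂ}
    (hd : HasDerivAt D d x) : d = 0 := by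
  have key : ∀ (v : ℂ), v ≠ 0 → (d * v).re = 0 := by
    intro v hv
    have hL : HasDerivAt (fun t : ℝ => x + t • v) v 0 := by
      simpa using ((hasDerivAt_id (0:ℝ)).smul_const v).const_add x
    have hc : HasDerivAt (fun t : ℝ => D (x + t • v)) (d * v) 0 := by
      have := HasDerivAt.scomp (x := (0:ℝ)) (by simpa using hd) hL
      simpa [smul_eq_mul, mul_comm, Function.comp_def] using this
    have hre' : HasDerivAt (fun t : ℝ => (D (x + t • v)).re) (d * v).re 0 := by
      have := (Complex.reCLM.hasFDerivAt (x := D (x + (0:ℝ) • v))).comp_hasDerivAt 0 hc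
      simpa [Function.comp_def] using this
    have heq : (fun t : ℝ => (D (x + t • v)).re) =ᶠ[nhds (0:ℝ)] (fun _ => (0:ℝ)) := by
      have hcont : ContinuousAt (fun t : ℝ => x + t • v) 0 := by fun_prop
      have : ∀ᶠ t in nhds (0:ℝ), x + t • v ∈ U := by
        have := hcont.preimage_mem_nhds (by simpa using hx)
        exact this
      filter_upwards [this] with t ht using hre _ ht
    have h0 : HasDerivAt (fun t : ℝ => (D (x + t • v)).re) 0 0 :=
      (hasDerivAt_const (0:ℝ) (0:ℝ)).congr_of_eventuallyEq heq
    exact (hre'.unique h0)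
  have h1 : d.re = 0 := by simpa using key 1 one_ne_zero
  have h2 : d.im = 0 := by
    have := key Complex.I Complex.I_ne_zero
    simpa [Complex.mul_re] using this
  exact Complex.ext h1 h2

open scoped Interval in
lemma primitive_on_ball {g : ℂ → ℂ} {c : ℂ} {R : ℝ}
    (hg : DifferentiableOn ℂ g (ball c R)) :
    ∃ G : ℂ → ℂ, ∀ w ∈ ball c R, HasDerivAt G (g w) w := by
  have hgc : ContinuousOn g (ball c R) := hg.continuousOn
  refine ⟨fun w => (∫ x : ℝ in c.re..w.re, g (x + c.im * I)) +
      I • ∫ y : ℝ in c.im..w.im, g (w.re + y * I), fun w hw => ?_⟩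
  set d : ℝ := dist w c with hd
  have hdR : d < R := mem_ball.1 hw
  set ε : ℝ := (R - d) / 4 with hε
  have hεpos : 0 < ε := by rw [hε]; linarith
  set A : ℝ := |w.re - c.re| with hA
  set B : ℝ := |w.im - c.im| with hB
  have hAle : A ≤ d := by
    rw [hd, dist_eq, hA]
    simpa using Complex.abs_re_le_norm (w - c)
  have hBle : B ≤ d := by
    rw [hd, dist_eq, hB]
    simpa using Complex.abs_im_le_norm (w - c)
  have hAB : A ^ 2 + B ^ 2 = d ^ 2 := by
    rw [hA, hB, hd, dist_eq, _root_.sq_abs, _root_.sq_abs, Complex.sq_norm,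
      Complex.normSq_apply, Complex.sub_re, Complex.sub_im]
    ring
  -- master point membership lemma
  have hpt : ∀ x y : ℝ, |x - c.re| ≤ A + ε → |y - c.im| ≤ B + ε →
      (x + y * I : ℂ) ∈ ball c R := by
    intro x y hx hy
    rw [mem_ball, Complex.dist_eq]
    have hre : ((x : ℂ) + y * I - c).re = x - c.re := by simp
    have him : ((x : ℂ) + y * I - c).im = y - c.im := by simp
    rw [Complex.norm_def, Complex.normSq_apply, hre, him]
    have hRpos : (0:ℝ) < R := lt_of_le_of_lt dist_nonneg hdR
    rw [Real.sqrt_lt' hRpos]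
    have hx2 : (x - c.re) ^ 2 ≤ (A + ε) ^ 2 := by
      nlinarith [abs_nonneg (x - c.re), _root_.sq_abs (x - c.re), le_of_abs_le hx,
        neg_le_of_abs_le hx, abs_nonneg (w.re - c.re)]
    have hy2 : (y - c.im) ^ 2 ≤ (B + ε) ^ 2 := by
      nlinarith [abs_nonneg (y - c.im), _root_.sq_abs (y - c.im), le_of_abs_le hy,
        neg_le_of_abs_le hy, abs_nonneg (w.im - c.im)]
    have hdnn : (0:ℝ) ≤ d := dist_nonneg
    have hAnn : (0:ℝ) ≤ A := abs_nonneg _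
    have hBnn : (0:ℝ) ≤ B := abs_nonneg _
    have hR4 : R = d + 4 * ε := by rw [hε]; ring
    nlinarith [hx2, hy2, hAB, hAle, hBle, hεpos, hdnn]
  -- endpoint coordinate bounds
  have hcre : |c.re - c.re| ≤ A + ε := by
    simp only [sub_self, abs_zero]
    positivity
  have hcim : |c.im - c.im| ≤ B + ε := by
    simp only [sub_self, abs_zero]
    positivity
  have hwre : |w.re - c.re| ≤ A + ε := by rw [← hA]; linarith
  have hwim : |w.im - c.im| ≤ B + ε := by rw [← hB]; linarith
  -- integrability on admissible segments
  have hintH : ∀ e₁ e₂ y : ℝ, |e₁ - c.re| ≤ A + ε → |e₂ - c.re| ≤ A + ε →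
      |y - c.im| ≤ B + ε →
      IntervalIntegrable (fun x : ℝ => g (x + y * I)) MeasureTheory.volume e₁ e₂ := by
    intro e₁ e₂ y h1 h2 h3
    apply ContinuousOn.intervalIntegrable
    apply hgc.comp ((Complex.continuous_ofReal.add continuous_const).continuousOn)
    intro x hx
    exact hpt x y ((abs_sub_le_of_mem_uIcc hx).trans (max_le h1 h2)) h3
  have hintV : ∀ e₁ e₂ x : ℝ, |e₁ - c.im| ≤ B + ε → |e₂ - c.im| ≤ B + ε →
      |x - c.re| ≤ A + ε →
      IntervalIntegrable (fun y : ℝ => g (x + y * I)) MeasureTheory.volume e₁ e₂ := by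
    intro e₁ e₂ x h1 h2 h3
    apply ContinuousOn.intervalIntegrable
    apply hgc.comp
      ((continuous_const.add (Complex.continuous_ofReal.mul continuous_const)).continuousOn)
    intro y hy
    exact hpt x y h3 ((abs_sub_le_of_mem_uIcc hy).trans (max_le h1 h2))
  -- rectangle theorem, specialized
  have hrect : ∀ a₁ a₂ b₁ b₂ : ℝ, |a₁ - c.re| ≤ A + ε → |a₂ - c.re| ≤ A + ε →
      |b₁ - c.im| ≤ B + ε → |b₂ - c.im| ≤ B + ε →
      (∫ x : ℝ in a₁..a₂, g (x + b₁ * I)) - (∫ x : ℝ in a₁..a₂, g (x + b₂ * I)) +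
        I • (∫ y : ℝ in b₁..b₂, g (a₂ + y * I)) -
        I • (∫ y : ℝ in b₁..b₂, g (a₁ + y * I)) = 0 := by
    intro a₁ a₂ b₁ b₂ h1 h2 h3 h4
    have hsub : [[a₁, a₂]] ×ℂ [[b₁, b₂]] ⊆ ball c R := by
      intro p hp
      rw [Complex.mem_reProdIm] at hp
      have := hpt p.re p.im ((abs_sub_le_of_mem_uIcc hp.1).trans (max_le h1 h2))
        ((abs_sub_le_of_mem_uIcc hp.2).trans (max_le h3 h4))
      rwa [Complex.re_add_im] at this
    have := Complex.integral_boundary_rect_eq_zero_of_differentiableOn g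
      (a₁ + b₁ * I) (a₂ + b₂ * I) (hg.mono (by simpa using hsub))
    simpa using this
  -- now the derivative
  rw [hasDerivAt_iff_isLittleO, Asymptotics.isLittleO_iff]
  intro C hC
  have hca : ContinuousAt g w := (hg.differentiableAt (isOpen_ball.mem_nhds hw)).continuousAt
  rw [Metric.continuousAt_iff] at hca
  obtain ⟨δ₀, hδ₀pos, hδ₀⟩ := hca (C/2) (by linarith)
  have hδpos : 0 < min ε (δ₀/2) := lt_min hεpos (by linarith)
  filter_upwards [Metric.ball_mem_nhds w hδpos] with w' hw'
  have hd' : ‖w' - w‖ < min ε (δ₀/2) := by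
    rw [← Complex.dist_eq]; exact mem_ball.1 hw'
  have hd'ε : ‖w' - w‖ < ε := lt_of_lt_of_le hd' (min_le_left _ _)
  have hd'δ : ‖w' - w‖ < δ₀/2 := lt_of_lt_of_le hd' (min_le_right _ _)
  have hre_le : |w'.re - w.re| ≤ ‖w' - w‖ := by
    simpa using Complex.abs_re_le_norm (w' - w)
  have him_le : |w'.im - w.im| ≤ ‖w' - w‖ := by
    simpa using Complex.abs_im_le_norm (w' - w)
  have hw're : |w'.re - c.re| ≤ A + ε := by
    calc |w'.re - c.re| ≤ |w'.re - w.re| + |w.re - c.re| := abs_sub_le _ _ _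
    _ ≤ A + ε := by rw [← hA]; linarith
  have hw'im : |w'.im - c.im| ≤ B + ε := by
    calc |w'.im - c.im| ≤ |w'.im - w.im| + |w.im - c.im| := abs_sub_le _ _ _
    _ ≤ B + ε := by rw [← hB]; linarith
  -- split and rectangle identities
  have i1 := hintH c.re w.re c.im hcre hwre hcim
  have i2 := hintH w.re w'.re c.im hwre hw're hcim
  have i3 := hintV c.im w.im w'.re hcim hwim hw're
  have i4 := hintV w.im w'.im w'.re hwim hw'im hw're
  have i5 := hintH w.re w'.re w.im hwre hw're hwim
  have hsplit1 := intervalIntegral.integral_add_adjacent_intervals i1 i2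
  have hsplit2 := intervalIntegral.integral_add_adjacent_intervals i3 i4
  have hr := hrect w.re w'.re c.im w.im hwre hw're hcim hwim
  have hdec : w' - w = ((w'.re - w.re : ℝ) : ℂ) + ((w'.im - w.im : ℝ) : ℂ) * I := by
    apply Complex.ext <;> simp
  set E1 : ℂ := ∫ x : ℝ in w.re..w'.re, (g (x + w.im * I) - g w) with hE1def
  set E2 : ℂ := ∫ y : ℝ in w.im..w'.im, (g (w'.re + y * I) - g w) with hE2def
  have e1 : E1 = (∫ x : ℝ in w.re..w'.re, g (x + w.im * I)) - (w'.re - w.re) * g w := by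
    rw [hE1def, intervalIntegral.integral_sub i5 intervalIntegrable_const,
      intervalIntegral.integral_const, Complex.real_smul]
    push_cast
    ring
  have e2 : E2 = (∫ y : ℝ in w.im..w'.im, g (w'.re + y * I)) - (w'.im - w.im) * g w := by
    rw [hE2def, intervalIntegral.integral_sub i4 intervalIntegrable_const,
      intervalIntegral.integral_const, Complex.real_smul]
    push_cast
    ring
  have key : ((∫ x : ℝ in c.re..w'.re, g (x + c.im * I)) +
      I • ∫ y : ℝ in c.im..w'.im, g (w'.re + y * I)) -
      ((∫ x : ℝ in c.re..w.re, g (x + c.im * I)) +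
      I • ∫ y : ℝ in c.im..w.im, g (w.re + y * I)) - (w' - w) • g w = E1 + I * E2 := by
    simp only [smul_eq_mul] at hr ⊢
    rw [← hsplit1, ← hsplit2, e1, e2]
    push_cast
    push_cast at hdec
    linear_combination hr - g w * hdec
  simp only [key]
  -- norm estimates
  have hb1 : ‖E1‖ ≤ C/2 * |w'.re - w.re| := by
    apply intervalIntegral.norm_integral_le_of_norm_le_const
    intro x hx
    have hx' : x ∈ Set.uIcc w.re w'.re := Set.uIoc_subset_uIcc hx
    have hb : |x - w.re| ≤ |w'.re - w.re| := by
      have := abs_sub_le_of_mem_uIcc (t := w.re) hx'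
      simpa using this
    have hptw : ((x : ℂ) + w.im * I) - w = ((x - w.re : ℝ) : ℂ) := by
      apply Complex.ext <;> simp
    have hdist : dist ((x : ℂ) + w.im * I) w < δ₀ := by
      rw [Complex.dist_eq, hptw, Complex.norm_real, Real.norm_eq_abs]
      calc |x - w.re| ≤ |w'.re - w.re| := hb
      _ ≤ ‖w' - w‖ := hre_le
      _ < δ₀/2 := hd'δ
      _ < δ₀ := by linarith
    have := hδ₀ hdist
    rw [Complex.dist_eq] at this
    exact this.le
  have hb2 : ‖E2‖ ≤ C/2 * |w'.im - w.im| := by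
    apply intervalIntegral.norm_integral_le_of_norm_le_const
    intro y hy
    have hy' : y ∈ Set.uIcc w.im w'.im := Set.uIoc_subset_uIcc hy
    have hb : |y - w.im| ≤ |w'.im - w.im| := by
      have := abs_sub_le_of_mem_uIcc (t := w.im) hy'
      simpa using this
    have hdist : dist ((w'.re : ℂ) + y * I) w < δ₀ := by
      rw [Complex.dist_eq]
      have h1 : ‖((w'.re : ℂ) + y * I) - w‖ ≤
          |(((w'.re : ℂ) + y * I) - w).re| + |(((w'.re : ℂ) + y * I) - w).im| :=
        Complex.norm_le_abs_re_add_abs_im _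
      have h2 : (((w'.re : ℂ) + y * I) - w).re = w'.re - w.re := by simp
      have h3 : (((w'.re : ℂ) + y * I) - w).im = y - w.im := by simp
      rw [h2, h3] at h1
      calc ‖((w'.re : ℂ) + y * I) - w‖ ≤ |w'.re - w.re| + |y - w.im| := h1
      _ ≤ ‖w' - w‖ + |w'.im - w.im| := by
          have := hb.trans him_le
          linarith [hre_le]
      _ ≤ ‖w' - w‖ + ‖w' - w‖ := by linarith [hb.trans him_le, him_le]
      _ < δ₀ := by linarith
    have := hδ₀ hdist
    rw [Complex.dist_eq] at this
    exact this.le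
  calc ‖E1 + I * E2‖ ≤ ‖E1‖ + ‖I * E2‖ := norm_add_le _ _
  _ = ‖E1‖ + ‖E2‖ := by rw [norm_mul, Complex.norm_I, one_mul]
  _ ≤ C/2 * |w'.re - w.re| + C/2 * |w'.im - w.im| := by linarith
  _ ≤ C/2 * ‖w' - w‖ + C/2 * ‖w' - w‖ := by
      have h1 : C/2 * |w'.re - w.re| ≤ C/2 * ‖w' - w‖ := by
        apply mul_le_mul_of_nonneg_left hre_le (by linarith)
      have h2 : C/2 * |w'.im - w.im| ≤ C/2 * ‖w' - w‖ := by
        apply mul_le_mul_of_nonneg_left him_le (by linarith)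
      linarith
  _ = C * ‖w' - w‖ := by ring

lemma exists_conj {u : ℂ → ℝ} {Ω : Set ℂ} (hu : HarmonicOnSet u Ω) {c : ℂ} {R : ℝ}
    (hR : 0 < R) (hsub : ball c R ⊆ Ω) :
    ∃ F : ℂ → ℂ, DifferentiableOn ℂ F (ball c R) ∧ ∀ w ∈ ball c R, u w = (F w).re := by
  classical
  -- choose local data
  have key : ∀ x : ℂ, ∃ (r : ℝ) (F : ℂ → ℂ), x ∈ Ω →
      0 < r ∧ ball x r ⊆ Ω ∧ DifferentiableOn ℂ F (ball x r) ∧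
        ∀ w ∈ ball x r, u w = (F w).re := by
    intro x
    by_cases hx : x ∈ Ω
    · obtain ⟨r, hr, hb, F, hF, hFre⟩ := hu x hx
      exact ⟨r, F, fun _ => ⟨hr, hb, hF, hFre⟩⟩
    · exact ⟨1, 0, fun h => absurd h hx⟩
  choose r F hrF using key
  set g : ℂ → ℂ := fun x => deriv (F x) x with hg
  -- g agrees with deriv (F x) on ball x (r x)
  have gloc : ∀ x ∈ Ω, ∀ w ∈ ball x (r x), g w = deriv (F x) w := by
    intro x hx w hw
    obtain ⟨hrx, hbx, hFx, hFrex⟩ := hrF x hx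
    have hwΩ : w ∈ Ω := hbx hw
    obtain ⟨hrw, hbw, hFw, hFrew⟩ := hrF w hwΩ
    set O := ball x (r x) ∩ ball w (r w) with hO
    have hOopen : IsOpen O := isOpen_ball.inter isOpen_ball
    have hwO : w ∈ O := ⟨hw, mem_ball_self hrw⟩
    have hD : HasDerivAt (fun v => F w v - F x v) (deriv (F w) w - deriv (F x) w) w := by
      refine HasDerivAt.sub ?_ ?_
      · exact (hFw.differentiableAt (isOpen_ball.mem_nhds (mem_ball_self hrw))).hasDerivAt
      · exact (hFx.differentiableAt (isOpen_ball.mem_nhds hw)).hasDerivAt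
    have h0 : deriv (F w) w - deriv (F x) w = 0 := by
      apply deriv_zero_of_re_eq_zero (U := O) _ (hOopen.mem_nhds hwO) hD
      intro v hv
      rw [Complex.sub_re, ← hFrew v hv.2, ← hFrex v hv.1, sub_self]
    have : g w = deriv (F w) w := rfl
    rw [this, sub_eq_zero.1 h0]
  -- g is differentiable on ball c R
  have hgd : DifferentiableOn ℂ g (ball c R) := by
    intro v hv
    have hvΩ : v ∈ Ω := hsub hv
    obtain ⟨hrv, hbv, hFv, hFrev⟩ := hrF v hvΩ
    have hloc : DifferentiableOn ℂ g (ball v (r v)) := by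
      apply DifferentiableOn.congr
        (((hFv.analyticOnNhd isOpen_ball).deriv).differentiableOn)
      exact gloc v hvΩ
    exact (hloc.differentiableAt
      (isOpen_ball.mem_nhds (mem_ball_self hrv))).differentiableWithinAt
  obtain ⟨G, hG⟩ := primitive_on_ball hgd
  -- v := Re G − u is locally constant on the ball
  set vv : ℂ → ℝ := fun w => (G w).re - u w with hvv
  have hloc_const : ∀ x ∈ ball c R, ∀ w ∈ ball c R ∩ ball x (r x), vv w = vv x := by
    intro x hx w hw
    have hxΩ : x ∈ Ω := hsub hx
    obtain ⟨hrx, hbx, hFx, hFrex⟩ := hrF x hxΩ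
    set O := ball c R ∩ ball x (r x) with hO
    have hOopen : IsOpen O := isOpen_ball.inter isOpen_ball
    have hxO : x ∈ O := ⟨hx, mem_ball_self hrx⟩
    have hconvex : Convex ℝ O := (convex_ball c R).inter (convex_ball x (r x))
    have hsubc : ∀ y ∈ O, HasDerivAt G (deriv (F x) y) y := by
      intro y hy
      have := hG y hy.1
      rwa [gloc x hxΩ y hy.2] at this
    have hcst : G w - F x w = G x - F x x := by
      apply hconvex.is_const_of_fderivWithin_eq_zero (𝕜 := ℂ)
        (f := fun y => G y - F x y) _ _ hw hxO
      · intro y hy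
        exact ((hsubc y hy).differentiableAt.differentiableWithinAt).sub
          ((hFx.differentiableAt (isOpen_ball.mem_nhds hy.2)).differentiableWithinAt)
      · intro y hy
        have hDy : HasDerivAt (fun y => G y - F x y) 0 y := by
          have := (hsubc y hy).sub
            ((hFx.differentiableAt (isOpen_ball.mem_nhds hy.2)).hasDerivAt)
          rwa [sub_self] at this
        rw [fderivWithin_of_isOpen hOopen hy, hDy.hasFDerivAt.fderiv]
        ext1
        simp
    have : (G w).re - (F x w).re = (G x).re - (F x x).re := by
      rw [← Complex.sub_re, ← Complex.sub_re, hcst]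
    rw [hvv]
    simp only
    rw [hFrex w hw.2, hFrex x (mem_ball_self hrx)]
    linarith
  -- global constancy via preconnectedness
  have hconst : ∀ w ∈ ball c R, vv w = vv c := by
    by_contra hcon
    push_neg at hcon
    obtain ⟨w₀, hw₀, hne⟩ := hcon
    set U : Set ℂ := ⋃ x ∈ {x | x ∈ ball c R ∧ vv x = vv c}, (ball c R ∩ ball x (r x)) with hU
    set V : Set ℂ := ⋃ x ∈ {x | x ∈ ball c R ∧ vv x ≠ vv c}, (ball c R ∩ ball x (r x)) with hV
    have hUopen : IsOpen U := isOpen_biUnion fun _ _ => isOpen_ball.inter isOpen_ball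
    have hVopen : IsOpen V := isOpen_biUnion fun _ _ => isOpen_ball.inter isOpen_ball
    have hrpos : ∀ x ∈ ball c R, 0 < r x := fun x hx => (hrF x (hsub hx)).1
    have hcover : ball c R ⊆ U ∪ V := by
      intro x hx
      by_cases hvx : vv x = vv c
      · exact Or.inl (mem_biUnion ⟨hx, hvx⟩ ⟨hx, mem_ball_self (hrpos x hx)⟩)
      · exact Or.inr (mem_biUnion ⟨hx, hvx⟩ ⟨hx, mem_ball_self (hrpos x hx)⟩)
    have hUval : ∀ w ∈ U, vv w = vv c := by
      intro w hw
      obtain ⟨x, hx, hwx⟩ := mem_iUnion₂.1 hw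
      rw [hloc_const x hx.1 w hwx, hx.2]
    have hVval : ∀ w ∈ V, vv w ≠ vv c := by
      intro w hw
      obtain ⟨x, hx, hwx⟩ := mem_iUnion₂.1 hw
      rw [hloc_const x hx.1 w hwx]
      exact hx.2
    have hpre := (convex_ball c R).isPreconnected
    obtain ⟨p, hp⟩ := hpre U V hUopen hVopen hcover
      ⟨c, mem_ball_self hR, mem_biUnion ⟨mem_ball_self hR, rfl⟩
        ⟨mem_ball_self hR, mem_ball_self (hrpos c (mem_ball_self hR))⟩⟩
      ⟨w₀, hw₀, mem_biUnion ⟨hw₀, hne⟩ ⟨hw₀, mem_ball_self (hrpos w₀ hw₀)⟩⟩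
    exact hVval p hp.2.2 (hUval p hp.2.1)
  -- final function
  refine ⟨fun w => G w - ((vv c : ℝ) : ℂ), ?_, ?_⟩
  · intro w hw
    exact ((hG w hw).differentiableAt.differentiableWithinAt).sub
      (differentiableOn_const _ _ hw)
  · intro w hw
    have h1 := hconst w hw
    have h2 : vv w = (G w).re - u w := rfl
    have h3 : vv c = (G c).re - u c := rfl
    simp only [Complex.sub_re, Complex.ofReal_re]
    rw [h2] at h1
    linarith

lemma pd_symm (z w : ℂ) : pd z w = pd w z := by
  unfold pd
  rw [norm_sub_rev]
  congr 1
  rw [← Complex.norm_conj (1 - (starRingEnd ℂ) z * w)]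
  congr 1
  simp only [map_sub, map_mul, map_one, Complex.conj_conj]
  ring

set_option maxHeartbeats 1000000 in
lemma per_point {H H₁ : ℂ → ℝ} (hH₁h : HarmonicOnSet H₁ unitDisk)
    {z lam : ℂ} (hH3z : Real.log 3 ≤ H z)
    (hH₁3 : ∀ w ∈ unitDisk, Real.log 3 ≤ H₁ w)
    (hz : z ∈ unitDisk) (hlam : lam ∈ unitDisk)
    (hout : Real.exp (-(H₁ lam)) ≤ pd z lam) :
    Real.exp (-(H z + 2 * H₁ z)) ≤ pd z lam := by
  have hz1 : ‖z‖ < 1 := hz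
  have hlam1 : ‖lam‖ < 1 := hlam
  have hH₁z := hH₁3 z hz
  have hH₁lam := hH₁3 lam hlam
  have hexp3 : Real.exp (-Real.log 3) = 1/3 := by
    rw [Real.exp_neg, Real.exp_log] <;> norm_num
  have e1 : Real.exp (-(H z)) ≤ 1/3 := by
    rw [← hexp3]; exact Real.exp_le_exp.2 (by linarith)
  have e2 : Real.exp (-(H₁ z)) ≤ 1/3 := by
    rw [← hexp3]; exact Real.exp_le_exp.2 (by linarith)
  have hKbound : Real.exp (-(H z + 2*H₁ z)) ≤ 1/9 * Real.exp (-(H₁ z)) := by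
    rw [show -(H z + 2*H₁ z) = (-(H z)) + ((-(H₁ z)) + (-(H₁ z))) by ring,
      Real.exp_add, Real.exp_add]
    have h12 : Real.exp (-(H z)) * Real.exp (-(H₁ z)) ≤ 1/9 := by
      nlinarith [Real.exp_pos (-(H z)), Real.exp_pos (-(H₁ z))]
    nlinarith [mul_le_mul_of_nonneg_right h12 (Real.exp_pos (-(H₁ z))).le,
      Real.exp_pos (-(H₁ z))]
  set ρ : ℝ := pd z lam with hρdef
  rcases le_or_gt (1/9 : ℝ) ρ with hρ | hρ
  · nlinarith [Real.exp_pos (-(H₁ z))]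
  · -- the hard case : lam is pseudohyperbolically close to z
    have hρpos : 0 < ρ := lt_of_lt_of_le (Real.exp_pos _) hout
    set den : ℝ := ‖1 - (starRingEnd ℂ) z * lam‖ with hden
    have hden_pos : 0 < den := by
      rw [hden]
      apply norm_pos_iff.2
      intro h
      rw [sub_eq_zero] at h
      have : ‖(starRingEnd ℂ) z * lam‖ < 1 := by
        rw [norm_mul, Complex.norm_conj]
        nlinarith [norm_nonneg z, norm_nonneg lam]
      rw [← h] at this
      simp at this
    have hnum : ‖z - lam‖ = ρ * den := by
      rw [hρdef]
      unfold pd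
      rw [← hden]
      field_simp
    have habs2 : ‖z‖ ^ 2 < 1 := by nlinarith [norm_nonneg z]
    have hden_le : den ≤ (1 - ‖z‖ ^ 2) + ‖z‖ * ‖z - lam‖ := by
      have hsplit : (1 : ℂ) - (starRingEnd ℂ) z * lam =
          (1 - (starRingEnd ℂ) z * z) + (starRingEnd ℂ) z * (z - lam) := by ring
      rw [hden, hsplit]
      calc ‖(1 - (starRingEnd ℂ) z * z) + (starRingEnd ℂ) z * (z - lam)‖
          ≤ ‖1 - (starRingEnd ℂ) z * z‖ +
            ‖(starRingEnd ℂ) z * (z - lam)‖ := norm_add_le _ _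
      _ = (1 - ‖z‖ ^ 2) + ‖z‖ * ‖z - lam‖ := by
          rw [norm_mul, Complex.norm_conj]
          congr 1
          have hcc : (1 : ℂ) - (starRingEnd ℂ) z * z = ((1 - ‖z‖ ^ 2 : ℝ) : ℂ) := by
            rw [mul_comm, Complex.mul_conj, Complex.normSq_eq_norm_sq]
            push_cast
            ring
          rw [hcc, Complex.norm_real, Real.norm_eq_abs, _root_.abs_of_nonneg (by linarith : (0:ℝ) ≤ 1 - ‖z‖ ^ 2)]
    have hchain : den * (1 - ρ) ≤ 1 - ‖z‖ ^ 2 := by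
      have hden_le' : den ≤ (1 - ‖z‖ ^ 2) + ‖z‖ * (ρ * den) :=
        hnum ▸ hden_le
      have hmono : ‖z‖ * (ρ * den) ≤ ρ * den := by
        nlinarith [mul_nonneg hρpos.le hden_pos.le, norm_nonneg z]
      nlinarith
    have hR₁ : 0 < 1 - ‖z‖ := by linarith
    have hden2 : den ≤ (9/4) * (1 - ‖z‖) := by
      nlinarith [norm_nonneg z]
    have hlamball : lam ∈ ball z (1 - ‖z‖) := by
      rw [mem_ball, Complex.dist_eq, norm_sub_rev, hnum]
      nlinarith
    have hsubD : ball z (1 - ‖z‖) ⊆ unitDisk := by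
      intro w hw
      rw [mem_ball, Complex.dist_eq] at hw
      have : ‖w‖ ≤ ‖w - z‖ + ‖z‖ := by
        calc ‖w‖ = ‖(w - z) + z‖ := by ring_nf
        _ ≤ _ := norm_add_le _ _
      show ‖w‖ < 1
      linarith
    obtain ⟨F, hFd, hFre⟩ := exists_conj hH₁h hR₁ hsubD
    set ψ : ℂ → ℂ := fun w => Complex.exp (-F w) with hψ
    have hψd : DifferentiableOn ℂ ψ (ball z (1 - ‖z‖)) := (hFd.neg).cexp
    have hψabs : ∀ w ∈ ball z (1 - ‖z‖),
        ‖ψ w‖ = Real.exp (-(H₁ w)) := by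
      intro w hw
      rw [hψ]
      simp only
      rw [Complex.norm_exp, Complex.neg_re, ← hFre w hw]
    have hψsmall : ∀ w ∈ ball z (1 - ‖z‖), ‖ψ w‖ ≤ 1/3 := by
      intro w hw
      rw [hψabs w hw, ← hexp3]
      exact Real.exp_le_exp.2 (by linarith [hH₁3 w (hsubD hw)])
    have hzself : z ∈ ball z (1 - ‖z‖) := mem_ball_self hR₁
    have hmaps : MapsTo ψ (ball z (1 - ‖z‖)) (ball (ψ z) (3/4)) := by
      intro w hw
      rw [mem_ball, Complex.dist_eq]
      calc ‖ψ w - ψ z‖ = ‖ψ w - ψ z‖ := rfl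
      _ ≤ ‖ψ w‖ + ‖ψ z‖ := norm_sub_le _ _
      _ ≤ 1/3 + 1/3 := add_le_add (hψsmall w hw) (hψsmall z hzself)
      _ < 3/4 := by norm_num
    have hSch := Complex.dist_le_div_mul_dist_of_mapsTo_ball hψd (hmaps.mono_right ball_subset_closedBall) hlamball
    have hdistlam : dist lam z ≤ (9/4) * (1 - ‖z‖) * ρ := by
      rw [Complex.dist_eq, norm_sub_rev, hnum]
      nlinarith
    have hSch2 : dist (ψ lam) (ψ z) ≤ 2 * ρ := by
      have h1 : (3/4) / (1 - ‖z‖) * dist lam z ≤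
          (3/4) / (1 - ‖z‖) * ((9/4) * (1 - ‖z‖) * ρ) := by
        apply mul_le_mul_of_nonneg_left hdistlam (by positivity)
      have h2 : (3/4) / (1 - ‖z‖) * ((9/4) * (1 - ‖z‖) * ρ) =
          (27/16) * ρ := by field_simp; ring
      nlinarith [hSch, hρpos.le]
    have htri : Real.exp (-(H₁ z)) ≤ Real.exp (-(H₁ lam)) + 2 * ρ := by
      have h1 : ‖ψ z‖ - ‖ψ lam‖ ≤ ‖ψ z - ψ lam‖ :=
        norm_sub_norm_le (ψ z) (ψ lam)
      rw [← hψabs z hzself, ← hψabs lam hlamball]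
      have h2 : ‖ψ z - ψ lam‖ = dist (ψ lam) (ψ z) := by
        rw [Complex.dist_eq, norm_sub_rev]
      linarith
    nlinarith [hout, Real.exp_pos (-(H₁ z))]


theorem statement12 (Λ : ℕ → ℂ) (hΛ : BlaschkeSeq Λ) (H : ℂ → ℝ)
    (hH : PosHarmonic H) (hH3 : ∀ z ∈ unitDisk, Real.log 3 ≤ H z)
    (hB : ∀ z ∈ unitDisk,
      Real.exp (-H z) * (⨅ n, pd z (Λ n)) ≤ ‖blaschkeProduct Λ z‖) :
    ∀ H₁ : ℂ → ℝ, PosHarmonic H₁ → (∀ z ∈ unitDisk, Real.log 3 ≤ H₁ z) →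
      ∀ z ∈ unitDisk, z ∉ ⋃ n, pBall (Λ n) (Real.exp (-H₁ (Λ n))) →
        Real.exp (-(2 * H z + 2 * H₁ z)) ≤ ‖blaschkeProduct Λ z‖ := by
  intro H₁ hH₁ hH₁3 z hz hout
  have hper : ∀ n, Real.exp (-(H z + 2 * H₁ z)) ≤ pd z (Λ n) := by
    intro n
    have hlamn : Λ n ∈ unitDisk := hΛ.1 n
    have houtn : Real.exp (-(H₁ (Λ n))) ≤ pd (Λ n) z := by
      by_contra hlt
      push_neg at hlt
      exact hout (mem_iUnion.2 ⟨n, ⟨hz, hlt⟩⟩)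
    rw [← pd_symm] at houtn
    exact per_point hH₁.1 (hH3 z hz) hH₁3 hz hlamn houtn
  have hinf : Real.exp (-(H z + 2 * H₁ z)) ≤ ⨅ n, pd z (Λ n) := le_ciInf hper
  calc Real.exp (-(2 * H z + 2 * H₁ z))
      = Real.exp (-H z) * Real.exp (-(H z + 2 * H₁ z)) := by
        rw [← Real.exp_add]; ring_nf
  _ ≤ Real.exp (-H z) * ⨅ n, pd z (Λ n) :=
        mul_le_mul_of_nonneg_left hinf (Real.exp_pos _).le
  _ ≤ ‖blaschkeProduct Λ z‖ := hB z hz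

end
end

section
/- Let B be a Blaschke product with zero sequence Λ, let z be a point of the unit disk and δ ∈ (0,1) be such that Λ ∩ D(z,δ) = ∅, and let ρ_Δ denote the pseudohyperbolic distance in the disk Δ = D(z,δ). Then: (a) |B(z)|^{(1+ρ_Δ(z,w))/(1−ρ_Δ(z,w))} ≤ |B(w)| ≤ |B(z)|^{(1−ρ_Δ(z,w))/(1+ρ_Δ(z,w))} for every w ∈ Δ; (b) (1−|z|²)|B'(z)| ≤ (|B(z)|/δ)·log(1/|B(z)|²). -/
open Complex Metric Set Filter

noncomputable section

namespace Aux

lemma den_pos {a w : ℂ} (ha : ‖a‖ < 1) (hw : ‖w‖ < 1) :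
    0 < ‖1 - (starRingEnd ℂ) a * w‖ := by
  have h : ‖(starRingEnd ℂ) a * w‖ < 1 := by
    rw [norm_mul, Complex.norm_conj]
    nlinarith [norm_nonneg a, norm_nonneg w]
  have : (1 : ℂ) - (starRingEnd ℂ) a * w ≠ 0 := by
    intro h0
    have : (starRingEnd ℂ) a * w = 1 := by linear_combination -h0
    rw [this] at h; simp at h
  simpa [norm_pos_iff] using this

lemma den_ne {a w : ℂ} (ha : ‖a‖ < 1) (hw : ‖w‖ < 1) :
    (1 : ℂ) - (starRingEnd ℂ) a * w ≠ 0 := by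
  have := den_pos ha hw
  intro h0; rw [h0] at this; simp at this

lemma sq_identity (a w : ℂ) :
    ‖1 - (starRingEnd ℂ) a * w‖ ^ 2 - ‖a - w‖ ^ 2
      = (1 - ‖a‖ ^ 2) * (1 - ‖w‖ ^ 2) := by
  rw [← Complex.normSq_eq_norm_sq, ← Complex.normSq_eq_norm_sq, ← Complex.normSq_eq_norm_sq,
    ← Complex.normSq_eq_norm_sq]
  simp only [Complex.normSq_apply, Complex.sub_re, Complex.sub_im, Complex.one_re,
    Complex.one_im, Complex.mul_re, Complex.mul_im, Complex.conj_re, Complex.conj_im]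
  ring

lemma pd_nonneg (a w : ℂ) : 0 ≤ pd a w := by
  unfold pd; positivity

lemma pd_comm (a w : ℂ) : pd a w = pd w a := by
  unfold pd
  have h1 : ‖a - w‖ = ‖w - a‖ := norm_sub_rev a w
  have h2 : ((starRingEnd ℂ) (1 - (starRingEnd ℂ) a * w)) = 1 - (starRingEnd ℂ) w * a := by
    simp [map_sub, map_mul, mul_comm]
  rw [← Complex.norm_conj (1 - (starRingEnd ℂ) a * w), h2, h1]

lemma pd_lt_one {a w : ℂ} (ha : ‖a‖ < 1) (hw : ‖w‖ < 1) :
    pd a w < 1 := by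
  have h := sq_identity a w
  have hd := den_pos ha hw
  have ha2 : ‖a‖ ^ 2 < 1 := by nlinarith [norm_nonneg a]
  have hw2 : ‖w‖ ^ 2 < 1 := by nlinarith [norm_nonneg w]
  have hpos : (0:ℝ) < (1 - ‖a‖ ^ 2) * (1 - ‖w‖ ^ 2) :=
    mul_pos (by linarith) (by linarith)
  have : ‖a - w‖ < ‖1 - (starRingEnd ℂ) a * w‖ := by
    nlinarith [norm_nonneg (a - w)]
  exact (div_lt_one hd).2 this

lemma pd_pos {a w : ℂ} (ha : ‖a‖ < 1) (hw : ‖w‖ < 1) (hne : a ≠ w) :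
    0 < pd a w := by
  apply div_pos _ (den_pos ha hw)
  simpa [norm_pos_iff, sub_eq_zero] using hne

lemma pd_eq_zero {a w : ℂ} (h : pd a w = 0) (ha : ‖a‖ < 1)
    (hw : ‖w‖ < 1) : a = w := by
  by_contra hne
  exact absurd h (ne_of_gt (pd_pos ha hw hne))


/-- Möbius map sending `z` to `0`. -/
def mob (z u : ℂ) : ℂ := (z - u) / (1 - (starRingEnd ℂ) z * u)

lemma abs_mob {z u : ℂ} : ‖mob z u‖ = pd z u := by
  simp [mob, pd, norm_div]

lemma mob_lt_one {z u : ℂ} (hz : ‖z‖ < 1) (hu : ‖u‖ < 1) :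
    ‖mob z u‖ < 1 := by
  rw [abs_mob]; exact pd_lt_one hz hu

lemma conj_abs_sq (z : ℂ) : (starRingEnd ℂ) z * z = ((‖z‖ : ℝ) : ℂ) ^ 2 := by
  rw [Complex.conj_mul']

lemma mob_diff {z a w : ℂ} (hz : ‖z‖ < 1) (ha : ‖a‖ < 1)
    (hw : ‖w‖ < 1) :
    mob z a - mob z w =
      (w - a) * ((1 : ℂ) - ((‖z‖ : ℝ) : ℂ) ^ 2) /
        ((1 - (starRingEnd ℂ) z * a) * (1 - (starRingEnd ℂ) z * w)) := by
  have d1 := den_ne hz ha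
  have d2 := den_ne hz hw
  have hzz := conj_abs_sq z
  unfold mob
  rw [div_sub_div _ _ d1 d2]
  congr 1
  linear_combination (a - w) * hzz

lemma mob_one_sub {z a w : ℂ} (hz : ‖z‖ < 1) (ha : ‖a‖ < 1)
    (hw : ‖w‖ < 1) :
    1 - (starRingEnd ℂ) (mob z a) * mob z w =
      (1 - (starRingEnd ℂ) a * w) * ((1 : ℂ) - ((‖z‖ : ℝ) : ℂ) ^ 2) /
        ((1 - z * (starRingEnd ℂ) a) * (1 - (starRingEnd ℂ) z * w)) := by
  have d1 : (1 : ℂ) - z * (starRingEnd ℂ) a ≠ 0 := by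
    intro h0
    apply den_ne hz ha
    have := congrArg (starRingEnd ℂ) h0
    simpa [map_sub, map_mul] using this
  have d2 := den_ne hz hw
  have hzz := conj_abs_sq z
  have d1'' : (1 : ℂ) - (starRingEnd ℂ) a * z ≠ 0 := by rw [mul_comm]; exact d1
  simp only [mob, map_div₀, map_sub, map_mul, Complex.conj_conj, map_one]
  field_simp
  linear_combination ((starRingEnd ℂ) a * w - 1) * hzz

lemma pd_mob {z a w : ℂ} (hz : ‖z‖ < 1) (ha : ‖a‖ < 1)
    (hw : ‖w‖ < 1) : pd (mob z a) (mob z w) = pd a w := by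
  have d1 := den_ne hz ha
  have d2 := den_ne hz hw
  have d1' : (1 : ℂ) - z * (starRingEnd ℂ) a ≠ 0 := by
    intro h0
    apply den_ne hz ha
    have := congrArg (starRingEnd ℂ) h0
    simpa [map_sub, map_mul] using this
  have habs : ‖(1:ℂ) - z * (starRingEnd ℂ) a‖
      = ‖(1:ℂ) - (starRingEnd ℂ) z * a‖ := by
    rw [← Complex.norm_conj ((1:ℂ) - z * (starRingEnd ℂ) a)]
    simp [map_sub, map_mul]
  have hz2 : ‖(1 : ℂ) - ((‖z‖ : ℝ) : ℂ) ^ 2‖ = 1 - ‖z‖ ^ 2 := by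
    rw [show (1 : ℂ) - ((‖z‖ : ℝ) : ℂ) ^ 2 = (((1 - ‖z‖ ^ 2 : ℝ)) : ℂ) by
      push_cast; ring]
    rw [Complex.norm_real, Real.norm_eq_abs, abs_of_pos]
    nlinarith [norm_nonneg z]
  have hz2pos : (0:ℝ) < 1 - ‖z‖ ^ 2 := by nlinarith [norm_nonneg z]
  unfold pd
  rw [mob_diff hz ha hw, mob_one_sub hz ha hw]
  have daw := den_ne ha hw
  have e1 : ‖w - a‖ = ‖a - w‖ := norm_sub_rev w a
  rw [norm_div, norm_div, norm_mul, norm_mul, norm_mul, norm_mul, hz2, habs, e1]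
  have A1 : ‖(1:ℂ) - (starRingEnd ℂ) z * a‖ ≠ 0 := ne_of_gt (den_pos hz ha)
  have A2 : ‖(1:ℂ) - (starRingEnd ℂ) z * w‖ ≠ 0 := ne_of_gt (den_pos hz hw)
  have A3 : ‖((1:ℂ) - (starRingEnd ℂ) a * w)‖ ≠ 0 := ne_of_gt (den_pos ha hw)
  have A1' : ‖(1:ℂ) - a * (starRingEnd ℂ) z‖ ≠ 0 := by rw [mul_comm]; exact A1
  have A2' : ‖(1:ℂ) - w * (starRingEnd ℂ) z‖ ≠ 0 := by rw [mul_comm]; exact A2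
  have A3' : ‖(1:ℂ) - w * (starRingEnd ℂ) a‖ ≠ 0 := by rw [mul_comm]; exact A3
  field_simp

lemma abs_re_bound (x y : ℂ) : |((starRingEnd ℂ) x * y).re| ≤ ‖x‖ * ‖y‖ := by
  calc |((starRingEnd ℂ) x * y).re| ≤ ‖(starRingEnd ℂ) x * y‖ := Complex.abs_re_le_norm _
  _ = ‖x‖ * ‖y‖ := by rw [norm_mul, Complex.norm_conj]

lemma sq_sub (x y : ℂ) : ‖x - y‖ ^ 2
    = ‖x‖ ^ 2 + ‖y‖ ^ 2 - 2 * ((starRingEnd ℂ) x * y).re := by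
  rw [← Complex.normSq_eq_norm_sq, ← Complex.normSq_eq_norm_sq, ← Complex.normSq_eq_norm_sq]
  simp only [Complex.normSq_apply, Complex.sub_re, Complex.sub_im, Complex.mul_re,
    Complex.mul_im, Complex.conj_re, Complex.conj_im]
  ring

lemma sq_one_sub (x y : ℂ) : ‖1 - (starRingEnd ℂ) x * y‖ ^ 2
    = 1 - 2 * ((starRingEnd ℂ) x * y).re + ‖x‖ ^ 2 * ‖y‖ ^ 2 := by
  rw [← Complex.normSq_eq_norm_sq, ← Complex.normSq_eq_norm_sq, ← Complex.normSq_eq_norm_sq]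
  simp only [Complex.normSq_apply, Complex.sub_re, Complex.sub_im, Complex.one_re,
    Complex.one_im, Complex.mul_re, Complex.mul_im, Complex.conj_re, Complex.conj_im]
  ring

/-- upper pseudohyperbolic triangle inequality at the origin -/
lemma pd_le_origin {x y : ℂ} (hx : ‖x‖ < 1) (hy : ‖y‖ < 1) :
    pd x y ≤ (‖x‖ + ‖y‖) / (1 + ‖x‖ * ‖y‖) := by
  set r := ‖x‖ with hr
  set q := ‖y‖ with hq
  set c := ((starRingEnd ℂ) x * y).re with hc
  have hr0 : 0 ≤ r := norm_nonneg x
  have hq0 : 0 ≤ q := norm_nonneg y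
  have hcb := abs_re_bound x y
  have hlo : -(r*q) ≤ c := by rw [hc, hr, hq]; cases' (abs_le.1 hcb) with h1 h2; linarith
  have hden : 0 < 1 + r * q := by nlinarith
  have hden2 := den_pos hx hy
  rw [pd, div_le_div_iff₀ hden2 hden]
  have hsq : (‖x - y‖ * (1 + r*q))^2 ≤
      ((r + q) * ‖1 - (starRingEnd ℂ) x * y‖)^2 := by
    have e1 := sq_sub x y
    have e2 := sq_one_sub x y
    nlinarith [mul_nonneg (mul_nonneg (by linarith : (0:ℝ) ≤ c + r*q)
      (by nlinarith : (0:ℝ) ≤ 1 - r^2)) (by nlinarith : (0:ℝ) ≤ 1 - q^2)]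
  have h1 : 0 ≤ ‖x - y‖ * (1 + r*q) :=
    mul_nonneg (norm_nonneg _) (le_of_lt hden)
  have h2 : 0 ≤ (r + q) * ‖1 - (starRingEnd ℂ) x * y‖ :=
    mul_nonneg (by linarith) (norm_nonneg _)
  nlinarith [hsq, h1, h2]

/-- lower pseudohyperbolic triangle inequality at the origin -/
lemma pd_ge_origin {x y : ℂ} (hx : ‖x‖ < 1) (hy : ‖y‖ < 1) :
    (‖x‖ - ‖y‖) / (1 - ‖x‖ * ‖y‖) ≤ pd x y := by
  set r := ‖x‖ with hr
  set q := ‖y‖ with hq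
  set c := ((starRingEnd ℂ) x * y).re with hc
  have hr0 : 0 ≤ r := norm_nonneg x
  have hq0 : 0 ≤ q := norm_nonneg y
  have hcb := abs_re_bound x y
  have hhi : c ≤ r*q := by rw [hc, hr, hq]; cases' (abs_le.1 hcb) with h1 h2; linarith
  have hden : 0 < 1 - r * q := by nlinarith
  have hden2 := den_pos hx hy
  rw [pd, div_le_div_iff₀ hden hden2]
  have hsq : ((r - q) * ‖1 - (starRingEnd ℂ) x * y‖)^2 ≤
      (‖x - y‖ * (1 - r*q))^2 := by
    have e1 := sq_sub x y
    have e2 := sq_one_sub x y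
    nlinarith [mul_nonneg (mul_nonneg (by linarith : (0:ℝ) ≤ r*q - c)
      (by nlinarith : (0:ℝ) ≤ 1 - r^2)) (by nlinarith : (0:ℝ) ≤ 1 - q^2)]
  rcases le_or_gt (r - q) 0 with h | h
  · have : 0 ≤ ‖x - y‖ * (1 - r*q) :=
      mul_nonneg (norm_nonneg _) (le_of_lt hden)
    nlinarith [norm_nonneg (1 - (starRingEnd ℂ) x * y)]
  · have h1 : 0 ≤ (r - q) * ‖1 - (starRingEnd ℂ) x * y‖ :=
      mul_nonneg (le_of_lt h) (norm_nonneg _)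
    have h2 : 0 ≤ ‖x - y‖ * (1 - r*q) :=
      mul_nonneg (norm_nonneg _) (le_of_lt hden)
    nlinarith

/-- upper pseudohyperbolic triangle inequality -/
lemma pd_triangle_upper {z a w : ℂ} (hz : ‖z‖ < 1) (ha : ‖a‖ < 1)
    (hw : ‖w‖ < 1) :
    pd a w ≤ (pd z a + pd z w) / (1 + pd z a * pd z w) := by
  have := pd_le_origin (mob_lt_one hz ha) (mob_lt_one hz hw)
  rwa [pd_mob hz ha hw, abs_mob, abs_mob] at this

/-- lower pseudohyperbolic triangle inequality -/
lemma pd_triangle_lower {z a w : ℂ} (hz : ‖z‖ < 1) (ha : ‖a‖ < 1)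
    (hw : ‖w‖ < 1) :
    (pd z a - pd z w) / (1 - pd z a * pd z w) ≤ pd a w := by
  have := pd_ge_origin (mob_lt_one hz ha) (mob_lt_one hz hw)
  rwa [pd_mob hz ha hw, abs_mob, abs_mob] at this


section core
variable {s t δ : ℝ}

lemma coreA (ht0 : 0 ≤ t) (htδ : t < δ) (hδs : δ ≤ s) (hs1 : s < 1) :
    s ^ ((δ + t)/(δ - t)) ≤ (s - t)/(1 - s*t) := by
  have hδ0 : 0 < δ := lt_of_le_of_lt ht0 htδ
  have hs0 : 0 < s := lt_of_lt_of_le hδ0 hδs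
  have hts : t < s := lt_of_lt_of_le htδ hδs
  have hst1 : s * t < 1 := by nlinarith
  have hdd : 0 < δ - t := by linarith
  have hsd : 0 < s - t := by linarith
  set q' : ℝ := (s + t)/(s - t) with hq'
  have hq'1 : 1 ≤ q' := by rw [hq', le_div_iff₀ hsd]; linarith
  have hqq : q' ≤ (δ + t)/(δ - t) := by
    rw [hq', div_le_div_iff₀ hsd hdd]; nlinarith
  have step1 : s ^ ((δ + t)/(δ - t)) ≤ s ^ q' :=
    Real.rpow_le_rpow_of_exponent_ge hs0 (le_of_lt hs1) hqq
  -- Bernoulli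
  have hber : 1 + q' * (1/s - 1) ≤ (1/s) ^ q' := by
    have := one_add_mul_self_le_rpow_one_add (s := 1/s - 1) (p := q')
      (by have : 0 ≤ 1/s - 1 := by
            rw [sub_nonneg, le_div_iff₀ hs0]; linarith
          linarith) hq'1
    simpa using this
  have hden : 0 < 1 + q' * (1/s - 1) := by
    have h1 : 0 ≤ 1/s - 1 := by rw [sub_nonneg, le_div_iff₀ hs0]; linarith
    nlinarith
  have hprod : s ^ q' * (1/s) ^ q' = 1 := by
    rw [← Real.mul_rpow (le_of_lt hs0) (by positivity)]
    rw [mul_one_div_cancel (ne_of_gt hs0), Real.one_rpow]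
  have hinv : s ^ q' ≤ 1/(1 + q' * (1/s - 1)) := by
    have hp : 0 < (1/s) ^ q' := Real.rpow_pos_of_pos (by positivity) _
    rw [le_div_iff₀ hden]
    calc s ^ q' * (1 + q' * (1/s - 1)) ≤ s ^ q' * (1/s) ^ q' := by
          apply mul_le_mul_of_nonneg_left hber (le_of_lt (Real.rpow_pos_of_pos hs0 _))
      _ = 1 := hprod
  have hval : 1 + q' * (1/s - 1) = (s + t - 2*s*t)/(s*(s - t)) := by
    rw [hq']; field_simp; ring
  have hnum : 0 < s + t - 2*s*t := by nlinarith
  have hfinal : 1/(1 + q' * (1/s - 1)) ≤ (s - t)/(1 - s*t) := by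
    rw [hval, one_div_div, div_le_div_iff₀ (by positivity) (by linarith)]
    nlinarith [mul_nonneg (mul_nonneg (le_of_lt hsd) ht0) (sq_nonneg (1 - s))]
  linarith

lemma coreB (ht0 : 0 ≤ t) (htδ : t < δ) (hδs : δ ≤ s) (hs1 : s < 1) :
    (s + t)/(1 + s*t) ≤ s ^ ((δ - t)/(δ + t)) := by
  have hδ0 : 0 < δ := lt_of_le_of_lt ht0 htδ
  have hs0 : 0 < s := lt_of_lt_of_le hδ0 hδs
  have hts : t < s := lt_of_lt_of_le htδ hδs
  set θ : ℝ := (s - t)/(s + t) with hθ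
  have hsum : 0 < s + t := by linarith
  have hθ0 : 0 ≤ θ := div_nonneg (by linarith) (le_of_lt hsum)
  have hθ1 : θ ≤ 1 := by rw [hθ, div_le_one hsum]; linarith
  have hθθ : (δ - t)/(δ + t) ≤ θ := by
    rw [hθ, div_le_div_iff₀ (by linarith) hsum]; nlinarith
  have step1 : s ^ θ ≤ s ^ ((δ - t)/(δ + t)) :=
    Real.rpow_le_rpow_of_exponent_ge hs0 (le_of_lt hs1) hθθ
  -- AM-GM
  have hgm : s ^ (1 - θ) ≤ (1 - θ) * s + θ := by
    have := Real.geom_mean_le_arith_mean2_weighted (w₁ := 1 - θ) (w₂ := θ)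
      (p₁ := s) (p₂ := 1) (by linarith) hθ0 (le_of_lt hs0) zero_le_one (by ring)
    simpa using this
  have hsp : 0 < s ^ (1 - θ) := Real.rpow_pos_of_pos hs0 _
  have hprod : s ^ θ * s ^ (1 - θ) = s := by
    rw [← Real.rpow_add hs0]; simp
  have hden : 0 < (1 - θ) * s + θ := lt_of_lt_of_le hsp hgm
  have hinv : s/((1 - θ) * s + θ) ≤ s ^ θ := by
    rw [div_le_iff₀ hden]
    calc s = s ^ θ * s ^ (1 - θ) := hprod.symm
      _ ≤ s ^ θ * ((1 - θ) * s + θ) := by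
          apply mul_le_mul_of_nonneg_left hgm (le_of_lt (Real.rpow_pos_of_pos hs0 _))
  have hval : (1 - θ) * s + θ = (2*t*s + s - t)/(s + t) := by
    rw [hθ]; field_simp; ring
  have hnum : 0 < 2*t*s + s - t := by nlinarith
  have hfinal : (s + t)/(1 + s*t) ≤ s/((1 - θ) * s + θ) := by
    rw [hval, div_div_eq_mul_div, div_le_div_iff₀ (by nlinarith) hnum]
    nlinarith [mul_nonneg (mul_nonneg (le_of_lt hsum) ht0) (sq_nonneg (1 - s))]
  calc (s + t)/(1 + s*t) ≤ s ^ θ := le_trans hfinal hinv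
    _ ≤ _ := step1

lemma log_sq_bound (hs0 : 0 < s) (hs1 : s < 1) : 1 - s^2 ≤ 2 * (- Real.log s) := by
  have := Real.log_le_sub_one_of_pos (show (0:ℝ) < s^2 by positivity)
  rw [show s^2 = s^(2:ℕ) by norm_num, Real.log_pow] at this
  push_cast at this
  linarith

end core

lemma abs_blaschkeFactor (a w : ℂ) : ‖blaschkeFactor a w‖ = pd a w := by
  rcases eq_or_ne a 0 with rfl | ha
  · simp [blaschkeFactor, pd]
  · have ha' : ‖a‖ ≠ 0 := by simpa [norm_eq_zero] using ha
    simp only [blaschkeFactor, if_neg ha, norm_mul, norm_div, Complex.norm_conj,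
      Complex.norm_real, Real.norm_eq_abs, _root_.abs_of_nonneg (norm_nonneg a), pd]
    rw [div_self ha', one_mul]

lemma blaschkeFactor_ne_zero {a w : ℂ} (ha : ‖a‖ < 1) (hw : ‖w‖ < 1)
    (hne : a ≠ w) : blaschkeFactor a w ≠ 0 := by
  intro h0
  have := abs_blaschkeFactor a w
  rw [h0] at this
  simp only [norm_zero] at this
  exact absurd (Aux.pd_eq_zero this.symm ha hw) hne

lemma one_sub_blaschkeFactor_le {a w : ℂ} (ha : ‖a‖ < 1) (hw : ‖w‖ < 1) :
    ‖1 - blaschkeFactor a w‖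
      ≤ (1 - ‖a‖) * (1 + ‖w‖) / (1 - ‖w‖) := by
  have hw1 : 0 < 1 - ‖w‖ := by linarith
  rcases eq_or_ne a 0 with rfl | ha0
  · simp only [blaschkeFactor, if_pos rfl, norm_zero, sub_zero, one_mul]
    have h1 : ‖1 - w‖ ≤ 1 + ‖w‖ := by
      calc ‖1 - w‖ ≤ ‖(1:ℂ)‖ + ‖w‖ := by
            simpa [sub_eq_add_neg] using norm_add_le 1 (-w)
        _ = 1 + ‖w‖ := by simp
    calc ‖1 - w‖ ≤ 1 + ‖w‖ := h1
      _ ≤ (1 + ‖w‖) / (1 - ‖w‖) := by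
          rw [le_div_iff₀ hw1]
          nlinarith [norm_nonneg w]
  · have hαpos : 0 < ‖a‖ := norm_pos_iff.mpr ha0
    set α : ℂ := ((‖a‖ : ℝ) : ℂ) with hα
    have hα0 : α ≠ 0 := Complex.ofReal_ne_zero.mpr (ne_of_gt hαpos)
    have hden := Aux.den_ne ha hw
    have hid : 1 - blaschkeFactor a w
        = (1 - α) * (α + (starRingEnd ℂ) a * w) / (α * (1 - (starRingEnd ℂ) a * w)) := by
      have hα0' : ((‖a‖ : ℝ) : ℂ) ≠ 0 := hα0
      rw [blaschkeFactor, if_neg ha0]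
      field_simp
      linear_combination (-((‖a‖ : ℝ) : ℂ)) * Aux.conj_abs_sq a
    rw [hid, norm_div, norm_mul, norm_mul]
    have e1 : ‖1 - α‖ = 1 - ‖a‖ := by
      rw [show (1 : ℂ) - α = (((1 - ‖a‖ : ℝ)) : ℂ) by rw [hα]; push_cast; ring]
      rw [Complex.norm_real, Real.norm_eq_abs, _root_.abs_of_nonneg (by linarith)]
    have e2 : ‖α‖ = ‖a‖ := by
      rw [hα, Complex.norm_real, Real.norm_eq_abs, _root_.abs_of_nonneg (norm_nonneg a)]
    have e3 : ‖α + (starRingEnd ℂ) a * w‖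
        ≤ ‖a‖ * (1 + ‖w‖) := by
      calc ‖α + (starRingEnd ℂ) a * w‖
          ≤ ‖α‖ + ‖(starRingEnd ℂ) a * w‖ := norm_add_le _ _
        _ = ‖a‖ + ‖a‖ * ‖w‖ := by
            rw [e2, norm_mul, Complex.norm_conj]
        _ = ‖a‖ * (1 + ‖w‖) := by ring
    have e4 : 1 - ‖w‖ ≤ ‖1 - (starRingEnd ℂ) a * w‖ := by
      have h5 : ‖(starRingEnd ℂ) a * w‖ ≤ ‖w‖ := by
        rw [norm_mul, Complex.norm_conj]
        nlinarith [norm_nonneg w, norm_nonneg a]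
      calc 1 - ‖w‖ ≤ 1 - ‖(starRingEnd ℂ) a * w‖ := by linarith
        _ = ‖(1:ℂ)‖ - ‖(starRingEnd ℂ) a * w‖ := by simp
        _ ≤ ‖1 - (starRingEnd ℂ) a * w‖ := by
            simpa using norm_sub_norm_le (1:ℂ) ((starRingEnd ℂ) a * w)
    rw [e1, e2]
    calc (1 - ‖a‖) * ‖α + (starRingEnd ℂ) a * w‖
          / (‖a‖ * ‖1 - (starRingEnd ℂ) a * w‖)
        ≤ (1 - ‖a‖) * (‖a‖ * (1 + ‖w‖))
          / (‖a‖ * (1 - ‖w‖)) := by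
          apply div_le_div₀ (mul_nonneg (by linarith) (by positivity))
            (mul_le_mul_of_nonneg_left e3 (by linarith))
            (by positivity)
            (mul_le_mul_of_nonneg_left e4 (le_of_lt hαpos))
      _ = (1 - ‖a‖) * (1 + ‖w‖) / (1 - ‖w‖) := by
          field_simp

section summ

variable {Λ : ℕ → ℂ} {w : ℂ}

lemma summable_log_factor (hΛ : BlaschkeSeq Λ) (hw : ‖w‖ < 1) :
    Summable fun n => Complex.log (blaschkeFactor (Λ n) w) := by
  set K : ℝ := (1 + ‖w‖) / (1 - ‖w‖) with hK
  have hw1 : 0 < 1 - ‖w‖ := by linarith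
  have hKpos : 0 < K := by positivity
  have hsum : Summable fun n => (3/2) * K * (1 - ‖Λ n‖) :=
    (hΛ.2.mul_left _)
  apply Summable.of_norm_bounded_eventually hsum
  have htend : Filter.Tendsto (fun n => 1 - ‖Λ n‖) Filter.cofinite (nhds 0) :=
    hΛ.2.tendsto_cofinite_zero
  have hev : ∀ᶠ n in Filter.cofinite, (1 - ‖Λ n‖) * K ≤ 1/2 := by
    have := htend.eventually (eventually_le_nhds (show (0:ℝ) < 1/(2*K) by positivity))
    filter_upwards [this] with n hn
    calc (1 - ‖Λ n‖) * K ≤ (1/(2*K)) * K := by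
          apply mul_le_mul_of_nonneg_right hn (le_of_lt hKpos)
      _ = 1/2 := by field_simp
  filter_upwards [hev] with n hn
  have hfb := one_sub_blaschkeFactor_le (hΛ.1 n) hw
  have hfb' : ‖blaschkeFactor (Λ n) w - 1‖ ≤ (1 - ‖Λ n‖) * K := by
    rw [← norm_sub_rev]
    calc ‖1 - blaschkeFactor (Λ n) w‖
        ≤ (1 - ‖Λ n‖) * (1 + ‖w‖) / (1 - ‖w‖) := hfb
      _ = (1 - ‖Λ n‖) * K := by rw [hK]; ring
  have hhalf : ‖blaschkeFactor (Λ n) w - 1‖ ≤ 1/2 := by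
    exact le_trans hfb' hn
  have := Complex.norm_log_one_add_half_le_self hhalf
  rw [show (1 : ℂ) + (blaschkeFactor (Λ n) w - 1) = blaschkeFactor (Λ n) w by ring] at this
  calc ‖Complex.log (blaschkeFactor (Λ n) w)‖ ≤ 3/2 * ‖blaschkeFactor (Λ n) w - 1‖ := this
    _ ≤ 3/2 * ((1 - ‖Λ n‖) * K) := by
        apply mul_le_mul_of_nonneg_left _ (by norm_num)
        exact hfb'
    _ = 3/2 * K * (1 - ‖Λ n‖) := by ring

lemma summable_log_pd (hΛ : BlaschkeSeq Λ) (hw : ‖w‖ < 1) :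
    Summable fun n => Real.log (pd (Λ n) w) := by
  have h := (summable_log_factor hΛ hw)
  have h2 : Summable fun n => (Complex.log (blaschkeFactor (Λ n) w)).re :=
    ⟨_, Complex.hasSum_re h.hasSum⟩
  apply h2.congr
  intro n
  rw [Complex.log_re, abs_blaschkeFactor]

lemma blaschkeProduct_eq_exp (hΛ : BlaschkeSeq Λ) (hw : ‖w‖ < 1)
    (hne : ∀ n, w ≠ Λ n) :
    blaschkeProduct Λ w = Complex.exp (∑' n, Complex.log (blaschkeFactor (Λ n) w)) := by
  have h0 : ∀ n, blaschkeFactor (Λ n) w ≠ 0 := fun n =>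
    blaschkeFactor_ne_zero (hΛ.1 n) hw (fun h => (hne n) h.symm)
  have hs := summable_log_factor hΛ hw
  have hp : HasProd (fun n => blaschkeFactor (Λ n) w)
      (Complex.exp (∑' n, Complex.log (blaschkeFactor (Λ n) w))) := by
    have := hs.hasSum.cexp
    have heq : (Complex.exp ∘ fun n => Complex.log (blaschkeFactor (Λ n) w))
        = fun n => blaschkeFactor (Λ n) w := by
      funext n
      exact Complex.exp_log (h0 n)
    rwa [heq] at this
  rw [blaschkeProduct, hp.tprod_eq]

lemma abs_blaschkeProduct (hΛ : BlaschkeSeq Λ) (hw : ‖w‖ < 1)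
    (hne : ∀ n, w ≠ Λ n) :
    ‖blaschkeProduct Λ w‖ = Real.exp (∑' n, Real.log (pd (Λ n) w)) := by
  have hs := summable_log_factor hΛ hw
  rw [blaschkeProduct_eq_exp hΛ hw hne, Complex.norm_exp, Complex.re_tsum hs]
  congr 1
  apply tsum_congr
  intro n
  rw [Complex.log_re, abs_blaschkeFactor]

end summ

section partA

variable {Λ : ℕ → ℂ} {z w : ℂ} {δ : ℝ}

lemma partA (hΛ : BlaschkeSeq Λ) (hz : ‖z‖ < 1) (hδ0 : 0 < δ) (hδ1 : δ < 1)
    (hsep : ∀ n, δ ≤ pd z (Λ n)) (hw : ‖w‖ < 1) (hpw : pd z w < δ) :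
    ‖blaschkeProduct Λ z‖ ^ ((1 + pd z w / δ) / (1 - pd z w / δ)) ≤
        ‖blaschkeProduct Λ w‖ ∧
      ‖blaschkeProduct Λ w‖ ≤
        ‖blaschkeProduct Λ z‖ ^ ((1 - pd z w / δ) / (1 + pd z w / δ)) := by
  set t : ℝ := pd z w with htdef
  have ht0 : 0 ≤ t := Aux.pd_nonneg z w
  have hδne : δ ≠ 0 := ne_of_gt hδ0
  have hnez : ∀ n, z ≠ Λ n := by
    intro n h
    have : pd z (Λ n) = 0 := by rw [← h]; simp [pd]
    have := hsep n
    linarith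
  have hnew : ∀ n, w ≠ Λ n := by
    intro n h
    have : pd z (Λ n) = t := by rw [← h]
    have := hsep n
    linarith [hpw]
  have hs0 : ∀ n, 0 < pd z (Λ n) := fun n => lt_of_lt_of_le hδ0 (hsep n)
  have hs1 : ∀ n, pd z (Λ n) < 1 := fun n => Aux.pd_lt_one hz (hΛ.1 n)
  have habsz : ‖blaschkeProduct Λ z‖
      = Real.exp (∑' n, Real.log (pd (Λ n) z)) := abs_blaschkeProduct hΛ hz hnez
  have habsw : ‖blaschkeProduct Λ w‖
      = Real.exp (∑' n, Real.log (pd (Λ n) w)) := abs_blaschkeProduct hΛ hw hnew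
  have hSz : Summable fun n => Real.log (pd (Λ n) z) := summable_log_pd hΛ hz
  have hSw : Summable fun n => Real.log (pd (Λ n) w) := summable_log_pd hΛ hw
  have hcomm : ∀ n, pd (Λ n) z = pd z (Λ n) := fun n => Aux.pd_comm _ _
  set p : ℝ := (δ + t)/(δ - t) with hpdef
  set p' : ℝ := (δ - t)/(δ + t) with hp'def
  have h1δ : (0:ℝ) < 1 - t/δ := by rw [sub_pos, div_lt_one hδ0]; exact hpw
  have h2δ : (0:ℝ) < 1 + t/δ := by positivity
  have hexp1 : (1 + t / δ) / (1 - t / δ) = p := by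
    rw [hpdef, div_eq_div_iff (ne_of_gt h1δ) (by linarith : δ - t ≠ 0)]
    field_simp
  have hexp2 : (1 - t / δ) / (1 + t / δ) = p' := by
    rw [hp'def, div_eq_div_iff (ne_of_gt h2δ) (by linarith : δ + t ≠ 0)]
    field_simp
  have claim1 : ∀ n, p * Real.log (pd (Λ n) z) ≤ Real.log (pd (Λ n) w) := by
    intro n
    set sn := pd z (Λ n) with hsn
    have h1 : sn ^ p ≤ (sn - t)/(1 - sn * t) := Aux.coreA ht0 hpw (hsep n) (hs1 n)
    have h2 : (sn - t)/(1 - sn * t) ≤ pd (Λ n) w := by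
      have := Aux.pd_triangle_lower hz (hΛ.1 n) hw
      rwa [htdef, hsn]
    have h3 : (0:ℝ) < sn ^ p := Real.rpow_pos_of_pos (hs0 n) _
    have h4 := Real.log_le_log h3 (le_trans h1 h2)
    rw [Real.log_rpow (hs0 n)] at h4
    rwa [hcomm n, ← hsn]
  have claim2 : ∀ n, Real.log (pd (Λ n) w) ≤ p' * Real.log (pd (Λ n) z) := by
    intro n
    set sn := pd z (Λ n) with hsn
    have h2 : pd (Λ n) w ≤ (sn + t)/(1 + sn * t) := by
      have := Aux.pd_triangle_upper hz (hΛ.1 n) hw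
      rwa [htdef, hsn]
    have h1 : (sn + t)/(1 + sn * t) ≤ sn ^ p' := Aux.coreB ht0 hpw (hsep n) (hs1 n)
    have hpos : (0:ℝ) < pd (Λ n) w :=
      Aux.pd_pos (hΛ.1 n) hw (fun h => (hnew n) h.symm)
    have h4 := Real.log_le_log hpos (le_trans h2 h1)
    rw [Real.log_rpow (hs0 n)] at h4
    rwa [hcomm n, ← hsn]
  constructor
  · rw [habsz, habsw, ← Real.exp_mul, hexp1]
    apply Real.exp_le_exp.2
    have := Summable.tsum_le_tsum claim1 (hSz.mul_left p) hSw
    rw [tsum_mul_left] at this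
    linarith
  · rw [habsz, habsw, ← Real.exp_mul, hexp2]
    apply Real.exp_le_exp.2
    have := Summable.tsum_le_tsum claim2 hSw (hSz.mul_left p')
    rw [tsum_mul_left] at this
    linarith

end partA

section partB

/-- logarithmic derivative of a Blaschke factor -/
def ld (a w : ℂ) : ℂ := (a * (starRingEnd ℂ) a - 1) / ((a - w) * (1 - (starRingEnd ℂ) a * w))

lemma hasDerivAt_blaschkeFactor {a w : ℂ} (ha : ‖a‖ < 1)
    (hw : ‖w‖ < 1) (hne : w ≠ a) :
    HasDerivAt (blaschkeFactor a) (blaschkeFactor a w * ld a w) w := by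
  have hden := Aux.den_ne ha hw
  have haw : a - w ≠ 0 := sub_ne_zero.mpr (Ne.symm hne)
  rcases eq_or_ne a 0 with rfl | ha0
  · have hw0 : w ≠ 0 := by simpa using hne
    have hfun : blaschkeFactor (0:ℂ) = fun z => z := by
      funext u; simp [blaschkeFactor]
    have hval : blaschkeFactor (0:ℂ) w * ld 0 w = 1 := by
      simp only [blaschkeFactor, ↓reduceIte, ld]
      field_simp
      simp
    rw [hval, hfun]
    exact hasDerivAt_id w
  · have hα : ((‖a‖ : ℝ) : ℂ) ≠ 0 :=
      Complex.ofReal_ne_zero.mpr (ne_of_gt (norm_pos_iff.mpr ha0))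
    have h1 : HasDerivAt (fun u : ℂ => a - u) (-1) w := by
      simpa using (hasDerivAt_id w).const_sub a
    have h2 : HasDerivAt (fun u : ℂ => 1 - (starRingEnd ℂ) a * u) (-((starRingEnd ℂ) a)) w := by
      simpa using ((hasDerivAt_id w).const_mul ((starRingEnd ℂ) a)).const_sub 1
    have h3 := (h1.div h2 hden).const_mul ((starRingEnd ℂ) a / ((‖a‖ : ℝ) : ℂ))
    have hfun : blaschkeFactor a = fun u : ℂ =>
        ((starRingEnd ℂ) a / ((‖a‖ : ℝ) : ℂ)) * ((a - u) / (1 - (starRingEnd ℂ) a * u)) := by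
      funext u; simp [blaschkeFactor, if_neg ha0]
    rw [hfun]
    refine h3.congr_deriv ?_
    simp only [ld]
    field_simp
    ring

lemma abs_ld {a w : ℂ} (ha : ‖a‖ < 1) :
    ‖ld a w‖ = (1 - ‖a‖ ^ 2) /
      (‖a - w‖ * ‖1 - (starRingEnd ℂ) a * w‖) := by
  have h0 : 0 ≤ ‖a‖ := norm_nonneg a
  have : a * (starRingEnd ℂ) a - 1 = (((‖a‖ ^ 2 - 1 : ℝ)) : ℂ) := by
    rw [mul_comm, Aux.conj_abs_sq]
    push_cast
    ring
  rw [ld, norm_div, this, norm_mul, Complex.norm_real, Real.norm_eq_abs, _root_.abs_of_nonpos (by nlinarith)]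
  ring_nf

section mainB
variable {Λ : ℕ → ℂ} {z : ℂ} {δ : ℝ}

set_option maxHeartbeats 1000000 in
lemma partB (hΛ : BlaschkeSeq Λ) (hz : ‖z‖ < 1) (hδ0 : 0 < δ) (hδ1 : δ < 1)
    (hsep : ∀ n, δ ≤ pd z (Λ n)) :
    (1 - ‖z‖ ^ 2) * ‖deriv (blaschkeProduct Λ) z‖ ≤
      ‖blaschkeProduct Λ z‖ / δ *
        Real.log (1 / ‖blaschkeProduct Λ z‖ ^ 2) := by
  have hz0 : 0 ≤ ‖z‖ := norm_nonneg z
  set R : ℝ := (1 + ‖z‖)/2 with hRdef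
  have hzR : ‖z‖ < R := by rw [hRdef]; linarith
  have hR1 : R < 1 := by rw [hRdef]; linarith
  have hR0 : 0 < 1 - R := by linarith
  have hRpos : 0 < R := by rw [hRdef]; linarith
  set r : ℝ := min ((1 - ‖z‖)/2) (δ*(1 - R)/2) with hrdef
  have hr0 : 0 < r := lt_min (by linarith) (by positivity)
  -- properties of points of the ball
  have hballR : ∀ w ∈ Metric.ball z r, ‖w‖ < R := by
    intro w hw
    rw [Metric.mem_ball, Complex.dist_eq] at hw
    have h1 : ‖w‖ ≤ ‖w - z‖ + ‖z‖ := by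
      calc ‖w‖ = ‖(w - z) + z‖ := by ring_nf
        _ ≤ ‖w - z‖ + ‖z‖ := norm_add_le _ _
    have h2 : r ≤ (1 - ‖z‖)/2 := min_le_left _ _
    rw [hRdef]; linarith
  have hball1 : ∀ w ∈ Metric.ball z r, ‖w‖ < 1 :=
    fun w hw => lt_trans (hballR w hw) hR1
  have hballpd : ∀ w ∈ Metric.ball z r, pd z w ≤ δ/2 := by
    intro w hw
    have hwR := hballR w hw
    have hw1 := hball1 w hw
    rw [Metric.mem_ball, Complex.dist_eq] at hw
    have hden : 1 - R ≤ ‖1 - (starRingEnd ℂ) z * w‖ := by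
      have h5 : ‖(starRingEnd ℂ) z * w‖ ≤ R := by
        rw [norm_mul, Complex.norm_conj]
        nlinarith [norm_nonneg w]
      calc 1 - R ≤ 1 - ‖(starRingEnd ℂ) z * w‖ := by linarith
        _ = ‖(1:ℂ)‖ - ‖(starRingEnd ℂ) z * w‖ := by simp
        _ ≤ ‖1 - (starRingEnd ℂ) z * w‖ := by
            simpa using norm_sub_norm_le (1:ℂ) ((starRingEnd ℂ) z * w)
    have hnum : ‖z - w‖ < r := by
      rw [norm_sub_rev]
      exact hw
    have hr2 : r ≤ δ*(1 - R)/2 := min_le_right _ _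
    have hdpos : 0 < ‖1 - (starRingEnd ℂ) z * w‖ := by linarith
    rw [pd, div_le_iff₀ hdpos]
    calc ‖z - w‖ ≤ r := le_of_lt hnum
      _ ≤ δ*(1-R)/2 := hr2
      _ ≤ δ/2 * ‖1 - (starRingEnd ℂ) z * w‖ := by nlinarith
  have hpdlow : ∀ n, ∀ w ∈ Metric.ball z r, δ/2 ≤ pd (Λ n) w := by
    intro n w hw
    have hw1 := hball1 w hw
    have htri := Aux.pd_triangle_lower hz (hΛ.1 n) hw1
    have hs := hsep n
    have ht := hballpd w hw
    have hs1 : pd z (Λ n) < 1 := Aux.pd_lt_one hz (hΛ.1 n)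
    have ht0 : 0 ≤ pd z w := Aux.pd_nonneg z w
    have ht1 : pd z w < 1 := Aux.pd_lt_one hz hw1
    have hst : 0 < 1 - pd z (Λ n) * pd z w := by nlinarith [Aux.pd_nonneg z (Λ n)]
    have h1 : pd z (Λ n) - pd z w ≤ (pd z (Λ n) - pd z w) / (1 - pd z (Λ n) * pd z w) := by
      rw [le_div_iff₀ hst]
      nlinarith [mul_nonneg (mul_nonneg
        (show (0:ℝ) ≤ pd z (Λ n) - pd z w by linarith)
        (Aux.pd_nonneg z (Λ n))) (Aux.pd_nonneg z w)]
    have : δ/2 ≤ pd z (Λ n) - pd z w := by linarith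
    linarith
  have hnew : ∀ n, ∀ w ∈ Metric.ball z r, w ≠ Λ n := by
    intro n w hw h
    have := hpdlow n w hw
    rw [← h] at this
    simp [pd] at this
    linarith
  have hz_ball : z ∈ Metric.ball z r := Metric.mem_ball_self hr0
  -- the summable bound for the log derivatives
  set c : ℝ := 4/(δ*(1-R)^2) with hcdef
  set u : ℕ → ℝ := fun n => c * (1 - ‖Λ n‖) with hudef
  have hu : Summable u := hΛ.2.mul_left c
  have hbound : ∀ n, ∀ w ∈ Metric.ball z r, ‖ld (Λ n) w‖ ≤ u n := by
    intro n w hw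
    set a := Λ n with hadef
    have ha : ‖a‖ < 1 := hΛ.1 n
    have hw1 := hball1 w hw
    have hwR := hballR w hw
    have hdpos := Aux.den_pos ha hw1
    have hden : 1 - R ≤ ‖1 - (starRingEnd ℂ) a * w‖ := by
      have h5 : ‖(starRingEnd ℂ) a * w‖ ≤ R := by
        rw [norm_mul, Complex.norm_conj]
        nlinarith [norm_nonneg a, norm_nonneg w]
      calc 1 - R ≤ 1 - ‖(starRingEnd ℂ) a * w‖ := by linarith
        _ = ‖(1:ℂ)‖ - ‖(starRingEnd ℂ) a * w‖ := by simp
        _ ≤ ‖1 - (starRingEnd ℂ) a * w‖ := by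
            simpa using norm_sub_norm_le (1:ℂ) ((starRingEnd ℂ) a * w)
    have hpd := hpdlow n w hw
    have haw : δ/2 * ‖1 - (starRingEnd ℂ) a * w‖ ≤ ‖a - w‖ := by
      have := hpd
      rw [pd, le_div_iff₀ hdpos] at this
      linarith
    have hprod : δ/2 * (1-R)^2 ≤ ‖a - w‖ * ‖1 - (starRingEnd ℂ) a * w‖ := by
      calc δ/2 * (1-R)^2 = (δ/2 * (1-R)) * (1-R) := by ring
        _ ≤ (δ/2 * ‖1 - (starRingEnd ℂ) a * w‖) * ‖1 - (starRingEnd ℂ) a * w‖ := by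
            apply mul_le_mul _ hden (by linarith) _
            · nlinarith
            · positivity
        _ ≤ ‖a - w‖ * ‖1 - (starRingEnd ℂ) a * w‖ :=
            mul_le_mul_of_nonneg_right haw (le_of_lt hdpos)
    rw [abs_ld ha]
    have hnum : 1 - ‖a‖ ^ 2 ≤ 2 * (1 - ‖a‖) := by
      nlinarith [norm_nonneg a]
    have hppos : (0:ℝ) < δ/2 * (1-R)^2 := by positivity
    calc (1 - ‖a‖ ^ 2) / (‖a - w‖ * ‖1 - (starRingEnd ℂ) a * w‖)
        ≤ (2 * (1 - ‖a‖)) / (δ/2 * (1-R)^2) := by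
          apply div_le_div₀ (by nlinarith [norm_nonneg a]) hnum hppos hprod
      _ = u n := by
          rw [hudef, hcdef]
          field_simp
          ring
  -- choose N for the tail
  set K : ℝ := (1 + R)/(1 - R) with hKdef
  have hK1 : 1 ≤ K := by rw [hKdef, le_div_iff₀ hR0]; linarith
  have hKpos : 0 < K := by linarith
  obtain ⟨N, hN⟩ : ∃ N, ∀ n ≥ N, 1 - ‖Λ n‖ ≤ 1/(2*K) := by
    have htend : Filter.Tendsto (fun n => 1 - ‖Λ n‖) Filter.atTop (nhds 0) :=
      hΛ.2.tendsto_atTop_zero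
    have := htend.eventually (eventually_le_nhds (show (0:ℝ) < 1/(2*K) by positivity))
    exact Filter.eventually_atTop.1 this
  have hfac_close : ∀ n ≥ N, ∀ w ∈ Metric.ball z r,
      ‖blaschkeFactor (Λ n) w - 1‖ ≤ 1/2 := by
    intro n hn w hw
    have ha : ‖Λ n‖ < 1 := hΛ.1 n
    have hw1 := hball1 w hw
    have hwR := hballR w hw
    have h1 := one_sub_blaschkeFactor_le ha hw1
    have h2 : (1 - ‖Λ n‖) * (1 + ‖w‖) / (1 - ‖w‖)
        ≤ (1 - ‖Λ n‖) * K := by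
      rw [hKdef, mul_div_assoc]
      apply mul_le_mul_of_nonneg_left _ (by linarith)
      apply div_le_div₀ (by linarith) (by linarith) (by linarith) (by linarith)
    have h3 : (1 - ‖Λ n‖) * K ≤ 1/2 := by
      calc (1 - ‖Λ n‖) * K ≤ (1/(2*K)) * K :=
            mul_le_mul_of_nonneg_right (hN n hn) (le_of_lt hKpos)
        _ = 1/2 := by field_simp
    rw [← norm_sub_rev]
    calc ‖1 - blaschkeFactor (Λ n) w‖
        ≤ (1 - ‖Λ n‖) * (1 + ‖w‖) / (1 - ‖w‖) := h1
      _ ≤ (1 - ‖Λ n‖) * K := h2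
      _ ≤ 1/2 := h3
  have hslit : ∀ n ≥ N, ∀ w ∈ Metric.ball z r,
      blaschkeFactor (Λ n) w ∈ Complex.slitPlane := by
    intro n hn w hw
    have h1 := hfac_close n hn w hw
    have h2 : |(blaschkeFactor (Λ n) w - 1).re| ≤ 1/2 :=
      le_trans (Complex.abs_re_le_norm _) h1
    have h3 : 0 < (blaschkeFactor (Λ n) w).re := by
      have : (blaschkeFactor (Λ n) w).re = (blaschkeFactor (Λ n) w - 1).re + 1 := by simp
      rw [this]
      cases' abs_le.1 h2 with hl hr
      linarith
    exact Or.inl h3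
  have hlogderiv : ∀ n ≥ N, ∀ w ∈ Metric.ball z r,
      HasDerivAt (fun y => Complex.log (blaschkeFactor (Λ n) y)) (ld (Λ n) w) w := by
    intro n hn w hw
    have hw1 := hball1 w hw
    have hfne : blaschkeFactor (Λ n) w ≠ 0 :=
      blaschkeFactor_ne_zero (hΛ.1 n) hw1 (fun h => (hnew n w hw) h.symm)
    have h1 := (hasDerivAt_blaschkeFactor (hΛ.1 n) hw1 (hnew n w hw)).clog (hslit n hn w hw)
    convert h1 using 1
    rw [mul_comm (blaschkeFactor (Λ n) w) (ld (Λ n) w), mul_div_assoc,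
      div_self hfne, mul_one]
  -- tail function and its derivative
  set T : ℂ → ℂ := fun w => ∑' k, Complex.log (blaschkeFactor (Λ (k + N)) w) with hTdef
  have hlogsum : ∀ w ∈ Metric.ball z r,
      Summable fun n => Complex.log (blaschkeFactor (Λ n) w) :=
    fun w hw => summable_log_factor hΛ (hball1 w hw)
  have hT : HasDerivAt T (∑' k, ld (Λ (k + N)) z) z := by
    refine hasDerivAt_of_tendstoUniformlyOn (f := fun (t : Finset ℕ) (w : ℂ) =>
        ∑ k ∈ t, Complex.log (blaschkeFactor (Λ (k + N)) w)) Metric.isOpen_ball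
      (tendstoUniformlyOn_tsum ((summable_nat_add_iff N).2 hu)
        (fun k w hw => hbound (k + N) w hw))
      ?_ ?_ hz_ball
    · apply Filter.Eventually.of_forall
      intro t w hw
      apply HasDerivAt.fun_sum
      intro k _
      exact hlogderiv (k + N) (Nat.le_add_left N k) w hw
    · intro w hw
      exact ((summable_nat_add_iff N).2 (hlogsum w hw)).hasSum
  -- head product
  set P : ℂ → ℂ := fun w => ∏ n ∈ Finset.range N, blaschkeFactor (Λ n) w with hPdef
  have hP : HasDerivAt P (∑ n ∈ Finset.range N,
      (∏ j ∈ (Finset.range N).erase n, blaschkeFactor (Λ j) z) •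
        (blaschkeFactor (Λ n) z * ld (Λ n) z)) z :=
    HasDerivAt.fun_finsetProd (fun i _ => hasDerivAt_blaschkeFactor (hΛ.1 i) hz (hnew i z hz_ball))
  have hPval : (∑ n ∈ Finset.range N,
      (∏ j ∈ (Finset.range N).erase n, blaschkeFactor (Λ j) z) •
        (blaschkeFactor (Λ n) z * ld (Λ n) z)) = P z * ∑ n ∈ Finset.range N, ld (Λ n) z := by
    rw [Finset.mul_sum]
    apply Finset.sum_congr rfl
    intro i hi
    rw [smul_eq_mul, ← mul_assoc, Finset.prod_erase_mul _ _ hi, hPdef]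
  -- local representation
  have hrepr : ∀ w ∈ Metric.ball z r, blaschkeProduct Λ w = P w * Complex.exp (T w) := by
    intro w hw
    have hw1 := hball1 w hw
    have h0 : ∀ n, blaschkeFactor (Λ n) w ≠ 0 := fun n =>
      blaschkeFactor_ne_zero (hΛ.1 n) hw1 (fun h => (hnew n w hw) h.symm)
    rw [blaschkeProduct_eq_exp hΛ hw1 (fun n => hnew n w hw),
      ← Summable.sum_add_tsum_nat_add N (hlogsum w hw), Complex.exp_add, hTdef, hPdef]
    congr 1
    rw [Complex.exp_sum]
    apply Finset.prod_congr rfl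
    intro i _
    exact Complex.exp_log (h0 i)
  -- derivative of the product
  set S' : ℂ := ∑ n ∈ Finset.range N, ld (Λ n) z + ∑' k, ld (Λ (k + N)) z with hS'def
  have hBloc : HasDerivAt (fun w => P w * Complex.exp (T w))
      (blaschkeProduct Λ z * S') z := by
    have h1 := hP.mul hT.cexp
    have h2 : blaschkeProduct Λ z = P z * Complex.exp (T z) := hrepr z hz_ball
    refine h1.congr_deriv ?_
    rw [hPval, h2, hS'def]
    ring
  have hB : HasDerivAt (blaschkeProduct Λ) (blaschkeProduct Λ z * S') z := by
    apply hBloc.congr_of_eventuallyEq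
    filter_upwards [Metric.ball_mem_nhds z hr0] with w hw
    exact hrepr w hw
  have hderiv : deriv (blaschkeProduct Λ) z = blaschkeProduct Λ z * S' := hB.deriv
  -- recombine the sum
  have hldz : Summable fun n => ld (Λ n) z :=
    Summable.of_norm_bounded hu (fun n => hbound n z hz_ball)
  have hcomb : S' = ∑' n, ld (Λ n) z := by
    rw [hS'def]
    exact Summable.sum_add_tsum_nat_add N hldz
  -- summability of norms
  have hldnorm : Summable fun n => ‖ld (Λ n) z‖ :=
    Summable.of_nonneg_of_le (fun n => norm_nonneg _) (fun n => hbound n z hz_ball) hu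
  have hnormS : ‖S'‖ ≤ ∑' n, ‖ld (Λ n) z‖ := by
    rw [hcomb]
    exact norm_tsum_le_tsum_norm hldnorm
  -- per-term estimate at z
  have hper : ∀ n, (1 - ‖z‖ ^ 2) * ‖ld (Λ n) z‖
      ≤ (2/δ) * (- Real.log (pd (Λ n) z)) := by
    intro n
    set a := Λ n with hadef
    have ha : ‖a‖ < 1 := hΛ.1 n
    set s : ℝ := pd (Λ n) z with hsdef
    have hscomm : s = pd z a := by rw [hsdef, hadef, Aux.pd_comm]
    have hs_lb : δ ≤ s := by rw [hscomm]; exact hsep n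
    have hs0 : 0 < s := lt_of_lt_of_le hδ0 hs_lb
    have hs1 : s < 1 := by rw [hsdef]; exact Aux.pd_lt_one (hΛ.1 n) hz
    have hdpos := Aux.den_pos ha hz
    have haz : ‖a - z‖ = s * ‖1 - (starRingEnd ℂ) a * z‖ := by
      rw [hsdef, pd, div_mul_cancel₀]
      exact ne_of_gt hdpos
    have hazpos : 0 < ‖a - z‖ := by
      rw [haz]; positivity
    have key : (1 - ‖z‖ ^ 2) * (1 - ‖a‖ ^ 2)
        = (1 - s^2) * ‖1 - (starRingEnd ℂ) a * z‖ ^ 2 := by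
      have hid := Aux.sq_identity a z
      have haz2 : ‖a - z‖^2 = s^2 * ‖1 - (starRingEnd ℂ) a * z‖^2 := by
        rw [haz]; ring
      nlinarith [hid, haz2]
    have heq : (1 - ‖z‖ ^ 2) * ‖ld (Λ n) z‖ = (1 - s^2)/s := by
      rw [← hadef, abs_ld ha, haz]
      rw [eq_div_iff (ne_of_gt hs0)]
      field_simp
      nlinarith [key, sq_nonneg (‖1 - (starRingEnd ℂ) a * z‖)]
    rw [heq]
    have hs2 : 0 ≤ 1 - s^2 := by nlinarith
    have h1 : (1 - s^2)/s ≤ (1 - s^2)/δ := by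
      rw [div_le_div_iff₀ hs0 hδ0]
      nlinarith [mul_nonneg hs2 (show (0:ℝ) ≤ s - δ by linarith)]
    have h2 : 1 - s^2 ≤ 2*(- Real.log s) := Aux.log_sq_bound hs0 hs1
    calc (1 - s^2)/s ≤ (1 - s^2)/δ := h1
      _ ≤ (2*(- Real.log s))/δ := (div_le_div_iff_of_pos_right hδ0).2 h2
      _ = (2/δ) * (- Real.log s) := by ring
  -- sum up
  have hlogz : Summable fun n => Real.log (pd (Λ n) z) := summable_log_pd hΛ hz
  have hsum_le : (1 - ‖z‖^2) * (∑' n, ‖ld (Λ n) z‖)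
      ≤ (2/δ) * (∑' n, - Real.log (pd (Λ n) z)) := by
    rw [← tsum_mul_left, ← tsum_mul_left]
    exact Summable.tsum_le_tsum hper (hldnorm.mul_left _) (hlogz.neg.mul_left _)
  have hnez : ∀ n, z ≠ Λ n := fun n => hnew n z hz_ball
  have habsz := abs_blaschkeProduct hΛ hz hnez
  set L : ℝ := ∑' n, Real.log (pd (Λ n) z) with hLdef
  have hBpos : 0 < ‖blaschkeProduct Λ z‖ := by rw [habsz]; exact Real.exp_pos _
  have hlog : Real.log (1 / ‖blaschkeProduct Λ z‖^2) = -2 * L := by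
    have h2 : ‖blaschkeProduct Λ z‖^2 = Real.exp (L + L) := by
      rw [habsz, Real.exp_add]
      ring
    rw [h2, one_div, Real.log_inv, Real.log_exp]
    ring
  rw [hderiv, norm_mul, hlog]
  have h1z : 0 ≤ 1 - ‖z‖^2 := by nlinarith
  have hSig : ∑' n, - Real.log (pd (Λ n) z) = - L := by rw [hLdef, tsum_neg]
  calc (1 - ‖z‖ ^ 2) * (‖blaschkeProduct Λ z‖ * ‖S'‖)
      = ‖blaschkeProduct Λ z‖ * ((1 - ‖z‖^2) * ‖S'‖) := by ring
    _ ≤ ‖blaschkeProduct Λ z‖ * ((1 - ‖z‖^2) * ∑' n, ‖ld (Λ n) z‖) :=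
        mul_le_mul_of_nonneg_left (mul_le_mul_of_nonneg_left hnormS h1z) hBpos.le
    _ ≤ ‖blaschkeProduct Λ z‖ * ((2/δ) * ∑' n, - Real.log (pd (Λ n) z)) :=
        mul_le_mul_of_nonneg_left hsum_le hBpos.le
    _ = ‖blaschkeProduct Λ z‖ / δ * (-2 * L) := by rw [hSig]; ring

end mainB

end partB

end Aux

theorem statement16 (Λ : ℕ → ℂ) (hΛ : BlaschkeSeq Λ)
    (z : ℂ) (hz : z ∈ unitDisk) (δ : ℝ) (hδ0 : 0 < δ) (hδ1 : δ < 1)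
    (hsep : ∀ n, δ ≤ pd z (Λ n)) :
    (∀ w ∈ unitDisk, pd z w < δ →
      ‖blaschkeProduct Λ z‖ ^ ((1 + pd z w / δ) / (1 - pd z w / δ)) ≤
          ‖blaschkeProduct Λ w‖ ∧
        ‖blaschkeProduct Λ w‖ ≤
          ‖blaschkeProduct Λ z‖ ^ ((1 - pd z w / δ) / (1 + pd z w / δ))) ∧
    (1 - ‖z‖ ^ 2) * ‖deriv (blaschkeProduct Λ) z‖ ≤
      ‖blaschkeProduct Λ z‖ / δ *
        Real.log (1 / ‖blaschkeProduct Λ z‖ ^ 2) := by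
  constructor
  · intro w hw hpd
    exact Aux.partA hΛ hz hδ0 hδ1 hsep hw hpd
  · exact Aux.partB hΛ hz hδ0 hδ1 hsep

end
end
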